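/- arXiv:2507.00581 — 5 statements merged into one kernel-verified Lean document; each statement's English description precedes it below -/
import Mathlib

section
/- Let μ be a compactly supported Borel probability measure on ℝ^d with a tight-frame spectrum Λ (with some constant A > 0). Let U ⊆ ℝ^d be an open set and suppose there is a function g : ℝ^d → ℝ which is infinitely differentiable on U with g(x) > 0 for all x ∈ U, such that (μ*μ̃)(E) = ∫_E g(x) dx for every Borel set E ⊆ U. Then for every Schwartz function φ : ℝ^d → ℂ whose support is a compact subset of U not containing 0, we have ∑_{λ∈Λ} φ̂(λ) = 0. -/
open MeasureTheory Metric Set ENNReal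

noncomputable section

/-- Euclidean space ℝ^d. -/
abbrev Euc (d : ℕ) := EuclideanSpace ℝ (Fin d)

/-- The exponential `e^{-2πi l·x}`. -/
noncomputable def fexp {d : ℕ} (l x : Euc d) : ℂ :=
  Complex.exp (-(2 * (Real.pi : ℂ) * Complex.I * ((inner ℝ l x : ℝ) : ℂ)))

/-- `Λ` is a tight-frame spectrum for `μ` with constant `A > 0`:
for every `f ∈ L²(μ)`, `∑_{λ∈Λ} |∫ f(x) e^{-2πi λ·x} dμ(x)|² = A ∫ |f|² dμ`. -/
def IsTightFrameSpectrum {d : ℕ} (μ : Measure (Euc d)) (Λ : Set (Euc d)) (A : ℝ) : Prop :=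
  Λ.Countable ∧ 0 < A ∧
    ∀ f : Euc d → ℂ, MemLp f 2 μ →
      ∑' l : Λ, ‖∫ x, f x * fexp (l : Euc d) x ∂μ‖ ^ 2 = A * ∫ x, ‖f x‖ ^ 2 ∂μ

/-- `μ` is tight-frame spectral: it admits a tight-frame spectrum with some constant `A > 0`. -/
def TightFrameSpectral {d : ℕ} (μ : Measure (Euc d)) : Prop :=
  ∃ Λ A, IsTightFrameSpectrum μ Λ A

/-- The segment measure `μ_{x₀,v}`: pushforward of Lebesgue measure on `[0,1]`
under `t ↦ x₀ + t • v`. -/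
noncomputable def segMeasure (x0 v : Euc 2) : Measure (Euc 2) :=
  Measure.map (fun t : ℝ => x0 + t • v) (volume.restrict (Set.Icc (0:ℝ) 1))

/-- `μ̃`: the pushforward of `μ` under `x ↦ -x`. -/
noncomputable def mneg {d : ℕ} (μ : Measure (Euc d)) : Measure (Euc d) :=
  Measure.map (fun x => -x) μ

/-- The convolution `μ * ν`: pushforward of `μ × ν` under `(x,y) ↦ x + y`. -/
noncomputable def mconv {d : ℕ} (μ ν : Measure (Euc d)) : Measure (Euc d) :=
  Measure.map (fun p : Euc d × Euc d => p.1 + p.2) (μ.prod ν)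

/-- The Fourier transform `f̂(ξ) = ∫ f(x) e^{-2πi ξ·x} dx`. -/
noncomputable def ftFun {d : ℕ} (f : Euc d → ℂ) (ξ : Euc d) : ℂ :=
  ∫ x, f x * fexp ξ x

open NNReal FourierTransform RealInnerProductSpace

namespace Aux

lemma fexp_norm {d : ℕ} (l x : Euc d) : ‖fexp l x‖ = 1 := by
  unfold fexp
  rw [Complex.norm_exp]
  have : (-(2 * (Real.pi : ℂ) * Complex.I * ((inner ℝ l x : ℝ) : ℂ))).re = 0 := by
    simp [Complex.mul_re, Complex.mul_im]
  rw [this, Real.exp_zero]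

lemma fexp_continuous2 {d : ℕ} :
    Continuous (fun p : Euc d × Euc d => fexp p.1 p.2) := by
  unfold fexp
  have h : Continuous (fun p : Euc d × Euc d => (inner ℝ p.1 p.2 : ℝ)) := continuous_inner
  exact Complex.continuous_exp.comp
    ((continuous_const.mul (Complex.continuous_ofReal.comp h)).neg)

lemma fexp_continuous {d : ℕ} (l : Euc d) : Continuous (fexp l) := by
  unfold fexp
  have h : Continuous fun x : Euc d => (inner ℝ l x : ℝ) :=
    continuous_const.inner continuous_id
  exact Complex.continuous_exp.comp
    ((continuous_const.mul (Complex.continuous_ofReal.comp h)).neg)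

lemma fexp_continuous' {d : ℕ} (x : Euc d) : Continuous (fun l => fexp l x) := by
  unfold fexp
  have h : Continuous fun l : Euc d => (inner ℝ l x : ℝ) :=
    continuous_id.inner continuous_const
  exact Complex.continuous_exp.comp
    ((continuous_const.mul (Complex.continuous_ofReal.comp h)).neg)

lemma fexp_add_left {d : ℕ} (a b x : Euc d) : fexp (a + b) x = fexp a x * fexp b x := by
  unfold fexp
  rw [← Complex.exp_add]
  congr 1
  rw [inner_add_left]
  push_cast
  ring

lemma fexp_add_right {d : ℕ} (l x y : Euc d) : fexp l (x + y) = fexp l x * fexp l y := by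
  unfold fexp
  rw [← Complex.exp_add]
  congr 1
  rw [inner_add_right]
  push_cast
  ring

lemma fexp_neg_right {d : ℕ} (l y : Euc d) : fexp l (-y) = starRingEnd ℂ (fexp l y) := by
  unfold fexp
  rw [← Complex.exp_conj]
  congr 1
  rw [inner_neg_right]
  push_cast
  simp only [map_mul, map_neg, Complex.conj_I, Complex.conj_ofReal, map_ofNat]
  ring

lemma fexp_zero_right {d : ℕ} (l : Euc d) : fexp l 0 = 1 := by
  unfold fexp
  simp

lemma ftFun_eq_fourierIntegral {d : ℕ} (f : Euc d → ℂ) (ξ : Euc d) :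
    ftFun f ξ = 𝓕 f ξ := by
  rw [Real.fourier_eq']
  unfold ftFun fexp
  congr 1
  ext x
  rw [smul_eq_mul, mul_comm]
  congr 2
  rw [real_inner_comm]
  push_cast
  ring

/-- A smooth compactly supported function is a Schwartz map. -/
def toSchwartz {d : ℕ} (f : Euc d → ℂ) (hf : ContDiff ℝ ((⊤ : ℕ∞) : WithTop ℕ∞) f)
    (h2 : HasCompactSupport f) : SchwartzMap (Euc d) ℂ where
  toFun := f
  smooth' := hf
  decay' := by
    intro k n
    have hFc : Continuous fun x : Euc d => ‖x‖ ^ k * ‖iteratedFDeriv ℝ n f x‖ :=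
      ((continuous_norm).pow k).mul
        ((hf.continuous_iteratedFDeriv (by exact_mod_cast le_top)).norm)
    have hFs : HasCompactSupport fun x : Euc d => ‖x‖ ^ k * ‖iteratedFDeriv ℝ n f x‖ :=
      ((h2.iteratedFDeriv n).norm).mul_left
    obtain ⟨C, hC⟩ := hFc.bounded_above_of_compact_support hFs
    exact ⟨C, fun x => (Real.le_norm_self _).trans (hC x)⟩

lemma cont_aux {d : ℕ} (l : Euc d) (F : Euc d → ℂ) (hF : Continuous F) :
    Continuous (fun q : (Euc d × Euc d) × Euc d =>
      F q.2 * (fexp (l - q.2) q.1.1 * fexp (l - q.2) q.1.2)) := by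
  have c1 : Continuous fun q : (Euc d × Euc d) × Euc d => F q.2 :=
    hF.comp continuous_snd
  have hp1 : Continuous fun q : (Euc d × Euc d) × Euc d =>
      ((l - q.2, q.1.1) : Euc d × Euc d) := by fun_prop
  have c2 : Continuous fun q : (Euc d × Euc d) × Euc d => fexp (l - q.2) q.1.1 :=
    Continuous.comp (f := fun q : (Euc d × Euc d) × Euc d =>
      ((l - q.2, q.1.1) : Euc d × Euc d)) fexp_continuous2 hp1
  have hp2 : Continuous fun q : (Euc d × Euc d) × Euc d =>
      ((l - q.2, q.1.2) : Euc d × Euc d) := by fun_prop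
  have c3 : Continuous fun q : (Euc d × Euc d) × Euc d => fexp (l - q.2) q.1.2 :=
    Continuous.comp (f := fun q : (Euc d × Euc d) × Euc d =>
      ((l - q.2, q.1.2) : Euc d × Euc d)) fexp_continuous2 hp2
  exact c1.mul (c2.mul c3)

lemma bint_aux {d : ℕ} (μ ν : Measure (Euc d)) [IsProbabilityMeasure μ]
    [IsProbabilityMeasure ν] (l : Euc d) (F : Euc d → ℂ) (hFc : Continuous F)
    (hFi : Integrable F) :
    Integrable (Function.uncurry fun (p : Euc d × Euc d) (t : Euc d) =>
      F t * (fexp (l - t) p.1 * fexp (l - t) p.2)) ((μ.prod ν).prod volume) := by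
  constructor
  · exact (cont_aux l F hFc).aestronglyMeasurable
  · have hb : Integrable (fun q : (Euc d × Euc d) × Euc d => ‖F q.2‖)
        ((μ.prod ν).prod volume) := by
      have := (integrable_const (1 : ℝ) :
        Integrable (fun _ : Euc d × Euc d => (1:ℝ)) (μ.prod ν)).mul_prod hFi.norm
      simpa using this
    refine (hb.hasFiniteIntegral).mono ?_
    refine Filter.Eventually.of_forall fun q => ?_
    simp only [Function.uncurry, norm_mul, norm_norm, fexp_norm, mul_one]
    exact le_rfl

lemma swap_aux {d : ℕ} (μ ν : Measure (Euc d)) [IsProbabilityMeasure μ]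
    [IsProbabilityMeasure ν] (l : Euc d) (F : Euc d → ℂ) (hFc : Continuous F)
    (hFi : Integrable F) :
    ∫ p : Euc d × Euc d, (∫ t, F t * (fexp (l - t) p.1 * fexp (l - t) p.2)) ∂(μ.prod ν)
      = ∫ t, ∫ p : Euc d × Euc d, F t * (fexp (l - t) p.1 * fexp (l - t) p.2) ∂(μ.prod ν) :=
  integral_integral_swap (bint_aux μ ν l F hFc hFi)

end Aux

open Aux NNReal FourierTransform RealInnerProductSpace

set_option maxHeartbeats 2000000 in
/-- If `μ` is a compactly supported probability measure with tight-frame spectrum `Λ`,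
and `μ*μ̃` has a smooth strictly positive density `g` on an open set `U`, then for every
Schwartz function `φ` with compact support contained in `U` and avoiding `0`,
`∑_{λ∈Λ} φ̂(λ) = 0`. -/
theorem support_of_dual_tiling_distribution
    {d : ℕ} (μ : Measure (Euc d)) [IsProbabilityMeasure μ]
    (hcpt : ∃ K : Set (Euc d), IsCompact K ∧ μ Kᶜ = 0)
    (Λ : Set (Euc d)) (A : ℝ) (hΛ : IsTightFrameSpectrum μ Λ A)
    (U : Set (Euc d)) (hU : IsOpen U) (g : Euc d → ℝ)
    (hg : ContDiffOn ℝ (⊤ : ℕ∞) g U) (hgpos : ∀ x ∈ U, 0 < g x)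
    (hdens : ∀ E : Set (Euc d), MeasurableSet E → E ⊆ U →
      mconv μ (mneg μ) E = ENNReal.ofReal (∫ x in E, g x)) :
    ∀ φ : SchwartzMap (Euc d) ℂ,
      IsCompact (tsupport (φ : Euc d → ℂ)) → tsupport (φ : Euc d → ℂ) ⊆ U →
      (0 : Euc d) ∉ tsupport (φ : Euc d → ℂ) →
      ∑' l : Λ, ftFun (fun x => φ x) (l : Euc d) = 0 := by
  intro φ hKc hKU h0K
  haveI : Countable Λ := hΛ.1.to_subtype
  have hA : 0 < A := hΛ.2.1
  set K : Set (Euc d) := tsupport (φ : Euc d → ℂ) with hKdef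
  set ν : Measure (Euc d) := mconv μ (mneg μ) with hνdef
  haveI : IsProbabilityMeasure (mneg μ) :=
    Measure.isProbabilityMeasure_map (measurable_neg.aemeasurable)
  haveI : IsProbabilityMeasure ν :=
    Measure.isProbabilityMeasure_map (measurable_add.aemeasurable)
  obtain ⟨L, hLc, hKL, hLU⟩ := exists_compact_between hKc hU hKU
  set W : Set (Euc d) := interior L with hWdef
  have hWopen : IsOpen W := isOpen_interior
  have hWmeas : MeasurableSet W := hWopen.measurableSet
  have hKW : K ⊆ W := hKL
  have hWU : W ⊆ U := interior_subset.trans hLU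
  -- ψ = φ / g on U, 0 elsewhere
  set ψ : Euc d → ℂ := U.indicator (fun x => φ x * ((g x : ℝ) : ℂ)⁻¹) with hψdef
  have hψ0 : ∀ x, x ∉ K → ψ x = 0 := by
    intro x hx
    by_cases hxU : x ∈ U
    · have : φ x = 0 := image_eq_zero_of_notMem_tsupport hx
      simp [hψdef, indicator_of_mem hxU, this]
    · simp [hψdef, indicator_of_notMem hxU]
  have hφψ : ∀ x, (ψ x) * ((g x : ℝ) : ℂ) = φ x := by
    intro x
    by_cases hxU : x ∈ U
    · have hgx : ((g x : ℝ) : ℂ) ≠ 0 := by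
        exact_mod_cast (hgpos x hxU).ne'
      rw [hψdef, indicator_of_mem hxU]
      field_simp
    · have : φ x = 0 := image_eq_zero_of_notMem_tsupport (fun hx => hxU (hKU hx))
      rw [hψdef, indicator_of_notMem hxU, this, zero_mul]
  have hψsmooth : ContDiff ℝ ((⊤ : ℕ∞) : WithTop ℕ∞) ψ := by
    rw [contDiff_iff_contDiffAt]
    intro x
    by_cases hxU : x ∈ U
    · have hgx : ContDiffAt ℝ ((⊤ : ℕ∞) : WithTop ℕ∞) g x :=
        hg.contDiffAt (hU.mem_nhds hxU)
      have hgxC : ContDiffAt ℝ ((⊤ : ℕ∞) : WithTop ℕ∞) (fun y => ((g y : ℝ) : ℂ)) x :=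
        Complex.ofRealCLM.contDiff.contDiffAt.comp x hgx
      have hne : ((g x : ℝ) : ℂ) ≠ 0 := by exact_mod_cast (hgpos x hxU).ne'
      have hmain : ContDiffAt ℝ ((⊤ : ℕ∞) : WithTop ℕ∞)
          (fun y => φ y * ((g y : ℝ) : ℂ)⁻¹) x :=
        ((φ.smooth _).contDiffAt).mul (hgxC.inv hne)
      exact hmain.congr_of_eventuallyEq
        (Filter.eventuallyEq_of_mem (hU.mem_nhds hxU)
          (fun y hy => indicator_of_mem hy _))
    · have hxK : x ∉ K := fun hx => hxU (hKU hx)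
      have hopen : IsOpen Kᶜ := (isClosed_tsupport _).isOpen_compl
      exact contDiffAt_const.congr_of_eventuallyEq
        (Filter.eventuallyEq_of_mem (hopen.mem_nhds hxK) (fun y hy => hψ0 y hy))
  have hψsupp : HasCompactSupport ψ := HasCompactSupport.intro hKc hψ0
  have hψcont : Continuous ψ := hψsmooth.continuous
  set ψS : SchwartzMap (Euc d) ℂ := toSchwartz ψ hψsmooth hψsupp with hψSdef
  have hψS : ⇑ψS = ψ := rfl
  have hψ0' : ψ 0 = 0 := hψ0 0 h0K
  -- Fourier transform of ψ
  set F : Euc d → ℂ := 𝓕 ψ with hFdef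
  have hFS : ⇑(SchwartzMap.fourierTransformCLM ℂ ψS) = F :=
    rfl
  have hFcont : Continuous F := hFS ▸ (SchwartzMap.fourierTransformCLM ℂ ψS).continuous
  have hFint : Integrable F := hFS ▸ (SchwartzMap.fourierTransformCLM ℂ ψS).integrable
  have hψint : Integrable ψ := hψcont.integrable_of_hasCompactSupport hψsupp
  have hinv : ∀ z, ψ z = ∫ t, fexp (-t) z * F t := by
    intro z
    have h1 : 𝓕⁻ (𝓕 ψ) = ψ := hψcont.fourierInv_fourier_eq hψint hFint
    conv_lhs => rw [← h1]
    rw [Real.fourierInv_eq']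
    refine integral_congr_ae (Filter.Eventually.of_forall fun t => ?_)
    dsimp only
    rw [smul_eq_mul]
    congr 1
    unfold fexp
    rw [inner_neg_left]
    congr 1
    push_cast
    ring
  -- μ's conjugate Fourier transform
  set M : Euc d → ℂ := fun ξ => ∫ x, fexp ξ x ∂μ with hMdef
  have hMcont : Continuous M := by
    apply continuous_of_dominated (bound := fun _ => (1 : ℝ))
    · exact fun ξ => (fexp_continuous ξ).aestronglyMeasurable
    · exact fun ξ => Filter.Eventually.of_forall fun x => (fexp_norm ξ x).le
    · exact integrable_const 1
    · exact Filter.Eventually.of_forall fun x => fexp_continuous' x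
  -- Step C : tight frame identity
  have hC : ∀ t : Euc d, ∑' l : Λ, ‖M ((l : Euc d) - t)‖ ^ 2 = A := by
    intro t
    have hmem : MemLp (fun x => fexp (-t) x) 2 μ := by
      refine (memLp_top_of_bound (fexp_continuous (-t)).aestronglyMeasurable 1
        (Filter.Eventually.of_forall fun x => (fexp_norm (-t) x).le)).mono_exponent
        le_top
    have := hΛ.2.2 (fun x => fexp (-t) x) hmem
    have h2 : ∀ l : Λ, ∫ x, fexp (-t) x * fexp (l : Euc d) x ∂μ = M ((l : Euc d) - t) := by
      intro l
      rw [hMdef]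
      refine integral_congr_ae (Filter.Eventually.of_forall fun x => ?_)
      dsimp only
      rw [← fexp_add_left, neg_add_eq_sub]
    have h3 : (∫ x, ‖fexp (-t) x‖ ^ 2 ∂μ) = 1 := by
      have : ∀ x, ‖fexp (-t) x‖ ^ 2 = 1 := fun x => by rw [fexp_norm]; norm_num
      simp only [this]
      simp
    rw [h3, mul_one] at this
    rw [← this]
    exact tsum_congr fun l => by rw [h2 l]
  have hCsummable : ∀ t : Euc d, Summable (fun l : Λ => ‖M ((l : Euc d) - t)‖ ^ 2) := by
    intro t
    by_contra h
    have := tsum_eq_zero_of_not_summable h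
    rw [hC t] at this
    exact hA.ne' this
  -- key integration identity against ν
  have hgL : IntegrableOn g L := (hg.continuousOn.mono hLU).integrableOn_compact hLc
  -- ν agrees with g·volume on W
  have hνW : ν.restrict W
      = (volume.restrict W).withDensity (fun x => (((g x).toNNReal : ℝ≥0) : ℝ≥0∞)) := by
    ext s hs
    rw [Measure.restrict_apply hs, hdens (s ∩ W) (hs.inter hWmeas)
      ((inter_subset_right).trans hWU), withDensity_apply _ hs,
      Measure.restrict_restrict hs]
    have hint : IntegrableOn g (s ∩ W) :=
      hgL.mono_set ((inter_subset_right).trans interior_subset)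
    have hnn : 0 ≤ᵐ[volume.restrict (s ∩ W)] g := by
      refine (ae_restrict_iff' (hs.inter hWmeas)).2
        (Filter.Eventually.of_forall fun x hx => (hgpos x (hWU hx.2)).le)
    rw [ofReal_integral_eq_lintegral_ofReal hint hnn]
    rfl
  have hgmeas : AEMeasurable (fun x => ((g x).toNNReal : ℝ≥0)) (volume.restrict W) := by
    exact measurable_real_toNNReal.comp_aemeasurable
      ((hg.continuousOn.mono hWU).aemeasurable hWmeas)
  have key : ∀ h : Euc d → ℂ, Continuous h → (∀ x, x ∉ K → h x = 0) →
      ∫ z, h z ∂ν = ∫ z, ((g z : ℝ) : ℂ) * h z := by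
    intro h hc h0
    have e1 : ∫ z, h z ∂ν = ∫ z in W, h z ∂ν :=
      (setIntegral_eq_integral_of_forall_compl_eq_zero
        (fun x hx => h0 x (fun hK' => hx (hKW hK')))).symm
    have e2 : ∫ z in W, h z ∂ν
        = ∫ z, ((g z).toNNReal : ℝ≥0) • h z ∂(volume.restrict W) := by
      rw [show (∫ z in W, h z ∂ν) = ∫ z, h z ∂(ν.restrict W) from rfl, hνW]
      exact integral_withDensity_eq_integral_smul₀ hgmeas h
    have e3 : ∫ z, ((g z).toNNReal : ℝ≥0) • h z ∂(volume.restrict W)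
        = ∫ z in W, ((g z : ℝ) : ℂ) * h z := by
      refine integral_congr_ae ((ae_restrict_iff' hWmeas).2
        (Filter.Eventually.of_forall fun x hx => ?_))
      dsimp only
      rw [NNReal.smul_def, Real.coe_toNNReal _ (hgpos x (hWU hx)).le,
        Complex.real_smul]
    have e4 : ∫ z in W, ((g z : ℝ) : ℂ) * h z = ∫ z, ((g z : ℝ) : ℂ) * h z :=
      setIntegral_eq_integral_of_forall_compl_eq_zero
        (fun x hx => by rw [h0 x (fun hK' => hx (hKW hK')), mul_zero])
    rw [e1, e2, e3, e4]
  -- Step A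
  have hA1 : ∀ l : Euc d, ftFun (fun x => φ x) l = ∫ z, ψ z * fexp l z ∂ν := by
    intro l
    rw [key (fun z => ψ z * fexp l z) (hψcont.mul (fexp_continuous l))
      (fun x hx => by rw [hψ0 x hx, zero_mul])]
    unfold ftFun
    refine integral_congr_ae (Filter.Eventually.of_forall fun x => ?_)
    dsimp only
    rw [← hφψ x]
    ring
  -- conjugate transform of mneg μ
  have hN : ∀ ξ : Euc d, ∫ y, fexp ξ y ∂(mneg μ) = starRingEnd ℂ (M ξ) := by
    intro ξ
    rw [mneg, integral_map measurable_neg.aemeasurable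
      (fexp_continuous ξ).aestronglyMeasurable]
    rw [hMdef, ← integral_conj]
    exact integral_congr_ae (Filter.Eventually.of_forall fun y => fexp_neg_right ξ y)
  -- Step B
  have hB : ∀ l : Euc d, ∫ z, ψ z * fexp l z ∂ν
      = ∫ t, F t * ((‖M (l - t)‖ ^ 2 : ℝ) : ℂ) := by
    intro l
    have b1 : ∫ z, ψ z * fexp l z ∂ν
        = ∫ p : Euc d × Euc d, ψ (p.1 + p.2) * fexp l (p.1 + p.2) ∂(μ.prod (mneg μ)) := by
      rw [hνdef, mconv]
      exact integral_map measurable_add.aemeasurable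
        ((hψcont.mul (fexp_continuous l)).aestronglyMeasurable)
    have b2 : ∀ p : Euc d × Euc d, ψ (p.1 + p.2) * fexp l (p.1 + p.2)
        = ∫ t, F t * (fexp (l - t) p.1 * fexp (l - t) p.2) := by
      intro p
      rw [hinv (p.1 + p.2), ← integral_mul_const]
      refine integral_congr_ae (Filter.Eventually.of_forall fun t => ?_)
      dsimp only
      rw [show fexp (l - t) p.1 * fexp (l - t) p.2 = fexp (l - t) (p.1 + p.2) from
        (fexp_add_right _ _ _).symm,
        show (l - t) = -t + l from by abel, fexp_add_left]
      ring
    have b4 : ∫ p : Euc d × Euc d, (∫ t, F t * (fexp (l - t) p.1 * fexp (l - t) p.2))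
          ∂(μ.prod (mneg μ))
        = ∫ t, ∫ p : Euc d × Euc d, F t * (fexp (l - t) p.1 * fexp (l - t) p.2)
          ∂(μ.prod (mneg μ)) := swap_aux μ (mneg μ) l F hFcont hFint
    have b5 : ∀ t, ∫ p : Euc d × Euc d, F t * (fexp (l - t) p.1 * fexp (l - t) p.2)
          ∂(μ.prod (mneg μ)) = F t * ((‖M (l - t)‖ ^ 2 : ℝ) : ℂ) := by
      intro t
      rw [integral_const_mul, integral_prod_mul (μ := μ) (ν := mneg μ)
        (fexp (l - t)) (fexp (l - t)), hN (l - t)]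
      congr 1
      rw [show (∫ x, fexp (l - t) x ∂μ) = M (l - t) from rfl, Complex.mul_conj,
        Complex.normSq_eq_norm_sq]
    calc ∫ z, ψ z * fexp l z ∂ν
        = ∫ p : Euc d × Euc d, ψ (p.1 + p.2) * fexp l (p.1 + p.2) ∂(μ.prod (mneg μ)) := b1
      _ = ∫ p : Euc d × Euc d, (∫ t, F t * (fexp (l - t) p.1 * fexp (l - t) p.2))
            ∂(μ.prod (mneg μ)) := by
          exact integral_congr_ae (Filter.Eventually.of_forall fun p => b2 p)
      _ = ∫ t, ∫ p : Euc d × Euc d, F t * (fexp (l - t) p.1 * fexp (l - t) p.2)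
            ∂(μ.prod (mneg μ)) := b4
      _ = ∫ t, F t * ((‖M (l - t)‖ ^ 2 : ℝ) : ℂ) := by
          exact integral_congr_ae (Filter.Eventually.of_forall fun t => b5 t)
  -- summability for the tsum/integral swap
  have hswap : ∑' l : Λ, ∫ t, F t * ((‖M ((l : Euc d) - t)‖ ^ 2 : ℝ) : ℂ)
      = ∫ t, ∑' l : Λ, F t * ((‖M ((l : Euc d) - t)‖ ^ 2 : ℝ) : ℂ) := by
    refine (integral_tsum (fun l => ?_) ?_).symm
    · exact (hFcont.mul (Complex.continuous_ofReal.comp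
        (((hMcont.comp (continuous_const.sub continuous_id)).norm).pow 2))).aestronglyMeasurable
    · have e1 : ∀ (l : Λ) (t : Euc d),
          (‖F t * ((‖M ((l : Euc d) - t)‖ ^ 2 : ℝ) : ℂ)‖₊ : ℝ≥0∞)
          = ↑‖F t‖₊ * ENNReal.ofReal (‖M ((l : Euc d) - t)‖ ^ 2) := by
        intro l t
        rw [nnnorm_mul, ENNReal.coe_mul]
        congr 1
        rw [← Real.enorm_eq_ofReal (by positivity)]
        congr 1
        simp [nnnorm, Complex.norm_real, abs_of_nonneg (by positivity : (0:ℝ) ≤ ‖M ((l : Euc d) - t)‖ ^ 2)]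
      have e2 : ∀ t : Euc d, ∑' l : Λ, ENNReal.ofReal (‖M ((l : Euc d) - t)‖ ^ 2)
          = ENNReal.ofReal A := by
        intro t
        rw [← ENNReal.ofReal_tsum_of_nonneg (fun l => by positivity) (hCsummable t), hC t]
      calc ∑' l : Λ, ∫⁻ t, ‖F t * ((‖M ((l : Euc d) - t)‖ ^ 2 : ℝ) : ℂ)‖₊
          = ∫⁻ t, ∑' l : Λ, (‖F t * ((‖M ((l : Euc d) - t)‖ ^ 2 : ℝ) : ℂ)‖₊ : ℝ≥0∞) := by
            refine (lintegral_tsum fun l => ?_).symm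
            exact (((hFcont.mul (Complex.continuous_ofReal.comp
              (((hMcont.comp (continuous_const.sub continuous_id)).norm).pow 2))).nnnorm).measurable).coe_nnreal_ennreal.aemeasurable
        _ = ∫⁻ t, ↑‖F t‖₊ * ENNReal.ofReal A := by
            refine lintegral_congr fun t => ?_
            simp_rw [e1]
            rw [ENNReal.tsum_mul_left, e2 t]
        _ = ENNReal.ofReal A * ∫⁻ t, ↑‖F t‖₊ := by
            rw [lintegral_mul_const'' _ hFcont.measurable.nnnorm.coe_nnreal_ennreal.aemeasurable,
              mul_comm]
        _ ≠ ⊤ := by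
            exact ENNReal.mul_ne_top ENNReal.ofReal_ne_top hFint.hasFiniteIntegral.ne
  -- final computation
  have hFtotal : ∫ t, F t = ψ 0 := by
    rw [hinv 0]
    refine integral_congr_ae (Filter.Eventually.of_forall fun t => ?_)
    dsimp only
    rw [fexp_zero_right, one_mul]
  calc ∑' l : Λ, ftFun (fun x => φ x) (l : Euc d)
      = ∑' l : Λ, ∫ t, F t * ((‖M ((l : Euc d) - t)‖ ^ 2 : ℝ) : ℂ) :=
        tsum_congr fun l => (hA1 l).trans (hB l)
    _ = ∫ t, ∑' l : Λ, F t * ((‖M ((l : Euc d) - t)‖ ^ 2 : ℝ) : ℂ) := hswap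
    _ = ∫ t, F t * (A : ℂ) := by
        refine integral_congr_ae (Filter.Eventually.of_forall fun t => ?_)
        dsimp only
        rw [_root_.tsum_mul_left]
        congr 1
        have hs := (hCsummable t)
        have : ∑' l : Λ, ((‖M ((l : Euc d) - t)‖ ^ 2 : ℝ) : ℂ)
            = ((∑' l : Λ, ‖M ((l : Euc d) - t)‖ ^ 2 : ℝ) : ℂ) := by
          have := Complex.ofRealCLM.map_tsum hs
          simpa using this.symm
        rw [this, hC t]
    _ = 0 := by
        rw [integral_mul_const, hFtotal, hψ0', zero_mul]
end
end

section
/- Let μ be a compactly supported Borel probability measure on ℝ^d and let Λ be a tight-frame spectrum for μ. Then Λ is translationally bounded: sup_{x∈ℝ^d} #(Λ ∩ B(x,1)) < ∞. -/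
open MeasureTheory Metric Set ENNReal

noncomputable section

lemma norm_fexp {d : ℕ} (l x : Euc d) : ‖fexp l x‖ = 1 := by
  simp [fexp, Complex.norm_exp]

lemma fexp_mul {d : ℕ} (l ξ x : Euc d) :
    fexp (-ξ) x * fexp l x = fexp (l - ξ) x := by
  rw [fexp, fexp, fexp, ← Complex.exp_add]
  congr 1
  have h1 : (inner ℝ (l - ξ) x : ℝ) = inner ℝ l x - inner ℝ ξ x := inner_sub_left _ _ _
  have h2 : (inner ℝ (-ξ) x : ℝ) = -(inner ℝ ξ x : ℝ) := inner_neg_left _ _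
  rw [h1, h2]
  push_cast
  ring

lemma cont_fexp {d : ℕ} (l : Euc d) : Continuous fun x : Euc d => fexp l x := by
  have h : Continuous fun x : Euc d => ((inner ℝ l x : ℝ) : ℂ) :=
    Complex.continuous_ofReal.comp (continuous_const.inner continuous_id)
  exact Complex.continuous_exp.comp (((continuous_const.mul h)).neg)

lemma memLp_fexp {d : ℕ} (μ : Measure (Euc d)) [IsFiniteMeasure μ] (l : Euc d) :
    MemLp (fun x => fexp l x) 2 μ :=
  MemLp.of_bound (cont_fexp l).aestronglyMeasurable 1
    (Filter.Eventually.of_forall fun x => (norm_fexp l x).le)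

/-- Frame identity applied to exponentials. -/
lemma frame_exp {d : ℕ} (μ : Measure (Euc d)) [IsProbabilityMeasure μ]
    {Λ : Set (Euc d)} {A : ℝ} (hΛ : IsTightFrameSpectrum μ Λ A) (ξ : Euc d) :
    ∑' l : Λ, ‖∫ x, fexp ((l : Euc d) - ξ) x ∂μ‖ ^ 2 = A := by
  have h := hΛ.2.2 (fun x => fexp (-ξ) x) (memLp_fexp μ (-ξ))
  have h1 : ∀ l : Λ, ∫ x, fexp (-ξ) x * fexp (l : Euc d) x ∂μ
      = ∫ x, fexp ((l : Euc d) - ξ) x ∂μ := by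
    intro l; congr 1; funext x; exact fexp_mul _ _ _
  have h2 : ∫ x, ‖fexp (-ξ) x‖ ^ 2 ∂μ = 1 := by
    have : ∀ x : Euc d, ‖fexp (-ξ) x‖ ^ 2 = (1:ℝ) := by
      intro x; rw [norm_fexp]; norm_num
    simp only [this, integral_const, measure_univ, probReal_univ, ENNReal.toReal_one, smul_eq_mul, mul_one]
  simp only [h2, mul_one] at h
  rw [← h]
  exact tsum_congr fun l => by rw [h1 l]

/-- Near the origin the Fourier transform of a compactly supported probability
measure has norm at least 1/2. -/
lemma ft_lower {d : ℕ} (μ : Measure (Euc d)) [IsProbabilityMeasure μ]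
    (hcpt : ∃ K : Set (Euc d), IsCompact K ∧ μ Kᶜ = 0) :
    ∃ δ : ℝ, 0 < δ ∧ ∀ w : Euc d, ‖w‖ < δ →
      (1/4 : ℝ) ≤ ‖∫ x, fexp w x ∂μ‖ ^ 2 := by
  obtain ⟨K, hK, hKc⟩ := hcpt
  obtain ⟨r, hr⟩ := hK.isBounded.subset_closedBall 0
  set R : ℝ := max r 1 with hR
  have hR1 : (1:ℝ) ≤ R := le_max_right _ _
  have hR0 : (0:ℝ) < R := lt_of_lt_of_le one_pos hR1
  have hKR : K ⊆ closedBall 0 R := hr.trans (closedBall_subset_closedBall (le_max_left _ _))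
  refine ⟨(8 * Real.pi * R)⁻¹, by positivity, fun w hw => ?_⟩
  -- for x in K, the phase is small
  have hae : ∀ᵐ x ∂μ, x ∈ K := by
    rw [MeasureTheory.ae_iff]
    exact measure_mono_null (fun x hx => hx) hKc |>.symm ▸ hKc
  have key : ∀ x ∈ K, ‖fexp w x - 1‖ ≤ 1/2 := by
    intro x hx
    have hxR : ‖x‖ ≤ R := by simpa using hKR hx
    have hip : |(inner ℝ w x : ℝ)| ≤ ‖w‖ * ‖x‖ := abs_real_inner_le_norm w x
    have hwn : (0:ℝ) ≤ ‖w‖ := norm_nonneg _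
    have hphase : 2 * Real.pi * |(inner ℝ w x : ℝ)| ≤ 1/4 := by
      have h1 : ‖w‖ * ‖x‖ ≤ (8 * Real.pi * R)⁻¹ * R := by
        apply mul_le_mul hw.le hxR (norm_nonneg _) (by positivity)
      have h2 : (8 * Real.pi * R)⁻¹ * R = (8 * Real.pi)⁻¹ := by
        field_simp
      have := hip.trans (h1.trans_eq h2)
      calc 2 * Real.pi * |(inner ℝ w x : ℝ)| ≤ 2 * Real.pi * (8 * Real.pi)⁻¹ := by
            apply mul_le_mul_of_nonneg_left this (by positivity)
        _ = 1/4 := by field_simp; ring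
    -- |exp z - 1| ≤ 2 |z| for |z| ≤ 1
    have habs : ‖-(2 * (Real.pi : ℂ) * Complex.I * ((inner ℝ w x : ℝ) : ℂ))‖
        = 2 * Real.pi * |(inner ℝ w x : ℝ)| := by
      rw [norm_neg, norm_mul, norm_mul, norm_mul, Complex.norm_two, Complex.norm_I,
        Complex.norm_real, Complex.norm_real, Real.norm_eq_abs, Real.norm_eq_abs,
        _root_.abs_of_pos Real.pi_pos]
      ring
    have hz1 : ‖-(2 * (Real.pi : ℂ) * Complex.I * ((inner ℝ w x : ℝ) : ℂ))‖ ≤ 1 := by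
      rw [habs]; linarith
    have := Complex.norm_exp_sub_one_le hz1
    rw [habs] at this
    calc ‖fexp w x - 1‖ = ‖Complex.exp _ - 1‖ := rfl
      _ ≤ 2 * (2 * Real.pi * |(inner ℝ w x : ℝ)|) := this
      _ ≤ 2 * (1/4) := by linarith
      _ = 1/2 := by norm_num
  -- integrability
  have hint : Integrable (fun x => fexp w x) μ :=
    memLp_one_iff_integrable.mp <|
      MemLp.of_bound (cont_fexp w).aestronglyMeasurable 1
        (Filter.Eventually.of_forall fun x => (norm_fexp w x).le)
  have hF1 : ‖(∫ x, fexp w x ∂μ) - 1‖ ≤ 1/2 := by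
    have h1 : (∫ x, fexp w x ∂μ) - 1 = ∫ x, (fexp w x - 1) ∂μ := by
      rw [integral_sub hint (integrable_const 1)]
      simp
    rw [h1]
    calc ‖∫ x, (fexp w x - 1) ∂μ‖ ≤ (1/2) * (μ Set.univ).toReal := by
          apply norm_integral_le_of_norm_le_const
          filter_upwards [hae] with x hx using key x hx
      _ = 1/2 := by simp
  have h12 : (1/2 : ℝ) ≤ ‖∫ x, fexp w x ∂μ‖ := by
    have := norm_sub_norm_le (1 : ℂ) ((1:ℂ) - ∫ x, fexp w x ∂μ)
    have h2 : ‖(1:ℂ) - ∫ x, fexp w x ∂μ‖ ≤ 1/2 := by rwa [norm_sub_rev] at hF1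
    have h3 : ‖(1:ℂ)‖ = 1 := norm_one
    have h4 : (1:ℂ) - ((1:ℂ) - ∫ x, fexp w x ∂μ) = ∫ x, fexp w x ∂μ := by ring
    rw [h4, h3] at this
    linarith
  calc (1/4 : ℝ) = (1/2)^2 := by norm_num
    _ ≤ ‖∫ x, fexp w x ∂μ‖ ^ 2 := by
        apply pow_le_pow_left₀ (by norm_num) h12

/-- Counting lemma: in each ball of radius δ there are at most ⌈4A⌉ points of Λ. -/
lemma count_ball {d : ℕ} (μ : Measure (Euc d)) [IsProbabilityMeasure μ]
    {Λ : Set (Euc d)} {A : ℝ} (hΛ : IsTightFrameSpectrum μ Λ A)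
    {δ : ℝ} (hδ : 0 < δ)
    (hlow : ∀ w : Euc d, ‖w‖ < δ → (1/4 : ℝ) ≤ ‖∫ x, fexp w x ∂μ‖ ^ 2)
    (ξ : Euc d) :
    (Λ ∩ Metric.ball ξ δ).encard ≤ (⌈4 * A⌉₊ : ℕ∞) := by
  set g : Λ → ℝ := fun l => ‖∫ x, fexp ((l : Euc d) - ξ) x ∂μ‖ ^ 2 with hg
  have htsum : ∑' l, g l = A := frame_exp μ hΛ ξ
  have hgnn : ∀ l, 0 ≤ g l := fun l => sq_nonneg _
  have hsum : Summable g := by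
    by_contra hns
    rw [tsum_eq_zero_of_not_summable hns] at htsum
    exact absurd htsum.symm (ne_of_gt hΛ.2.1)
  -- points of Λ in the ball have g ≥ 1/4
  set T : Set Λ := {l : Λ | (l : Euc d) ∈ Metric.ball ξ δ} with hT
  have hTg : ∀ l ∈ T, (1/4 : ℝ) ≤ g l := by
    intro l hl
    apply hlow
    rwa [← dist_eq_norm, ← mem_ball]
  have hTfin : T.Finite := by
    have hcof : {l : Λ | ¬ g l < 1/4}.Finite := by
      have := hsum.tendsto_cofinite_zero.eventually_lt_const (by norm_num : (0:ℝ) < 1/4)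
      rwa [Filter.eventually_cofinite] at this
    exact hcof.subset fun l hl => not_lt.mpr (hTg l hl)
  -- cardinality bound
  have hcard : (hTfin.toFinset.card : ℝ) ≤ 4 * A := by
    have h1 : (hTfin.toFinset.card : ℝ) * (1/4) ≤ ∑ l ∈ hTfin.toFinset, g l := by
      have := Finset.card_nsmul_le_sum hTfin.toFinset g (1/4)
        (fun l hl => hTg l (hTfin.mem_toFinset.mp hl))
      simpa [nsmul_eq_mul] using this
    have h2 : ∑ l ∈ hTfin.toFinset, g l ≤ A := by
      rw [← htsum]
      exact hsum.sum_le_tsum _ (fun l _ => hgnn l)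
    linarith
  have hcardn : hTfin.toFinset.card ≤ ⌈4 * A⌉₊ := by
    have := hcard.trans (Nat.le_ceil (4 * A))
    exact_mod_cast this
  -- transfer to the set
  have himg : Λ ∩ Metric.ball ξ δ = Subtype.val '' T := by
    ext y
    constructor
    · rintro ⟨hy, hball⟩; exact ⟨⟨y, hy⟩, hball, rfl⟩
    · rintro ⟨⟨y', hy'⟩, hball, rfl⟩; exact ⟨hy', hball⟩
  rw [himg, Subtype.val_injective.encard_image, hTfin.encard_eq_coe_toFinset_card]
  exact_mod_cast hcardn

/-- encard of a finite union is at most the sum. -/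
lemma encard_biUnion_le' {α β : Type*} (t : Finset β) (s : β → Set α) :
    (⋃ c ∈ t, s c).encard ≤ ∑ c ∈ t, (s c).encard := by
  classical
  induction t using Finset.induction with
  | empty => simp
  | insert _ _ h ih =>
    rename_i a t'
    rw [Finset.set_biUnion_insert, Finset.sum_insert h]
    exact (Set.encard_union_le _ _).trans (add_le_add_right ih _)

theorem main_thm
    {d : ℕ} (μ : Measure (Euc d)) [IsProbabilityMeasure μ]
    (hcpt : ∃ K : Set (Euc d), IsCompact K ∧ μ Kᶜ = 0)
    (Λ : Set (Euc d)) (A : ℝ) (hΛ : IsTightFrameSpectrum μ Λ A) :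
    (⨆ x : Euc d, ((Λ ∩ Metric.ball x 1).encard : ℕ∞)) < ⊤ := by
  obtain ⟨δ, hδ, hlow⟩ := ft_lower μ hcpt
  -- finite subcover of the closed unit ball by δ-balls
  have hcov : Metric.closedBall (0 : Euc d) 1 ⊆ ⋃ c : Euc d, Metric.ball c δ := by
    intro y _
    exact Set.mem_iUnion.mpr ⟨y, Metric.mem_ball_self hδ⟩
  obtain ⟨t, ht⟩ := (isCompact_closedBall (0 : Euc d) 1).elim_finite_subcover
    (fun c : Euc d => Metric.ball c δ) (fun c => Metric.isOpen_ball) hcov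
  set n0 : ℕ := ⌈4 * A⌉₊ with hn0
  have hbound : ∀ x : Euc d, (Λ ∩ Metric.ball x 1).encard ≤ ((t.card * n0 : ℕ) : ℕ∞) := by
    intro x
    have hsub : Λ ∩ Metric.ball x 1 ⊆ ⋃ c ∈ t, (Λ ∩ Metric.ball (x + c) δ) := by
      rintro y ⟨hyΛ, hy⟩
      have hyx : y - x ∈ Metric.closedBall (0 : Euc d) 1 := by
        rw [Metric.mem_closedBall, dist_zero_right]
        have := Metric.mem_ball.mp hy
        rw [dist_eq_norm] at this
        exact this.le
      obtain ⟨c, hc, hyc⟩ := Set.mem_iUnion₂.mp (ht hyx)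
      refine Set.mem_iUnion₂.mpr ⟨c, hc, hyΛ, ?_⟩
      rw [Metric.mem_ball, dist_eq_norm]
      rw [Metric.mem_ball, dist_eq_norm] at hyc
      have : y - (x + c) = y - x - c := by abel
      rwa [this]
    calc (Λ ∩ Metric.ball x 1).encard
        ≤ (⋃ c ∈ t, (Λ ∩ Metric.ball (x + c) δ)).encard := Set.encard_le_encard hsub
      _ ≤ ∑ c ∈ t, (Λ ∩ Metric.ball (x + c) δ).encard := encard_biUnion_le' t _
      _ ≤ ∑ _c ∈ t, (n0 : ℕ∞) := Finset.sum_le_sum fun c _ =>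
            count_ball μ hΛ hδ hlow (x + c)
      _ = ((t.card * n0 : ℕ) : ℕ∞) := by
            rw [Finset.sum_const, Nat.cast_mul]
            simp [nsmul_eq_mul]
  have : (⨆ x : Euc d, ((Λ ∩ Metric.ball x 1).encard : ℕ∞)) ≤ ((t.card * n0 : ℕ) : ℕ∞) :=
    iSup_le hbound
  exact lt_of_le_of_lt this (WithTop.coe_lt_top _)

/-- A tight-frame spectrum of a compactly supported probability measure is
translationally bounded: `sup_x #(Λ ∩ B(x,1)) < ∞`. -/
theorem tight_frame_spectrum_translationally_bounded
    {d : ℕ} (μ : Measure (Euc d)) [IsProbabilityMeasure μ]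
    (hcpt : ∃ K : Set (Euc d), IsCompact K ∧ μ Kᶜ = 0)
    (Λ : Set (Euc d)) (A : ℝ) (hΛ : IsTightFrameSpectrum μ Λ A) :
    (⨆ x : Euc d, ((Λ ∩ Metric.ball x 1).encard : ℕ∞)) < ⊤ :=
  main_thm μ hcpt Λ A hΛ
end
end

section
/- Let x₀, y₀ ∈ ℝ² and let v, w ∈ ℝ² be linearly independent. Let μ = μ_{x₀,v} and ν = μ_{y₀,w} be the corresponding segment measures. Then μ*ν̃ equals |det(v, w)|⁻¹ times Lebesgue measure restricted to the parallelogram (x₀ − y₀) + Q_{v,−w}; that is, for every Borel set E ⊆ ℝ², (μ*ν̃)(E) = |v₁w₂ − v₂w₁|⁻¹ · vol₂(E ∩ ((x₀ − y₀) + Q_{v,−w})). -/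
open MeasureTheory Metric Set ENNReal

noncomputable section

/-- The parallelogram `Q_{v,w} = {t•v + s•w : t,s ∈ [0,1]}`. -/
def Qpar (v w : Euc 2) : Set (Euc 2) :=
  (fun p : ℝ × ℝ => p.1 • v + p.2 • w) '' (Set.Icc (0:ℝ) 1 ×ˢ Set.Icc (0:ℝ) 1)

lemma mydet_ne_zero {v w : Euc 2} (hvw : LinearIndependent ℝ ![v, w]) :
    v 0 * w 1 - v 1 * w 0 ≠ 0 := by
  intro h
  have key := LinearIndependent.pair_iff.mp hvw
  have h1 := key (w 1) (-(v 1)) (by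
    ext i
    fin_cases i <;>
      simp only [Fin.mk_zero, Fin.mk_one, PiLp.add_apply, PiLp.smul_apply, PiLp.zero_apply, smul_eq_mul, neg_mul] <;>
      [linear_combination h; ring])
  have h2 := key (w 0) (-(v 0)) (by
    ext i
    fin_cases i <;>
      simp only [Fin.mk_zero, Fin.mk_one, PiLp.add_apply, PiLp.smul_apply, PiLp.zero_apply, smul_eq_mul, neg_mul] <;>
      [ring; linear_combination -h])
  have hv0 : v 0 = 0 := by have := h2.2; linarith
  have hv1 : v 1 = 0 := by have := h1.2; linarith
  have := key 1 0 (by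
    ext i
    fin_cases i <;>
      simp only [Fin.mk_zero, Fin.mk_one, PiLp.add_apply, PiLp.smul_apply, PiLp.zero_apply,
        one_smul, zero_smul, add_zero] <;> assumption)
  exact one_ne_zero this.1

lemma myL_inj {v w : Euc 2} (hvw : LinearIndependent ℝ ![v, w]) :
    Function.Injective (fun p : ℝ × ℝ => p.1 • v + p.2 • (-w)) := by
  intro p q h
  simp only at h
  have key := LinearIndependent.pair_iff.mp hvw (p.1 - q.1) (q.2 - p.2) (by
    have : (p.1 - q.1) • v + (q.2 - p.2) • w =
        (p.1 • v + p.2 • (-w)) - (q.1 • v + q.2 • (-w)) := by module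
    rw [this, h, sub_self])
  have e1 : p.1 = q.1 := by have := key.1; linarith
  have e2 : p.2 = q.2 := by have := key.2; linarith
  exact Prod.ext e1 e2

def Mlin (v w : Euc 2) : Euc 2 →ₗ[ℝ] Euc 2 where
  toFun x := x 0 • v + x 1 • (-w)
  map_add' x y := by
    simp only [PiLp.add_apply, add_smul]; abel
  map_smul' c x := by
    simp only [PiLp.smul_apply, smul_eq_mul, mul_smul, smul_add, RingHom.id_apply]

lemma det_Mlin (v w : Euc 2) :
    LinearMap.det (Mlin v w) = -(v 0 * w 1 - v 1 * w 0) := by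
  rw [← LinearMap.det_toMatrix (EuclideanSpace.basisFun (Fin 2) ℝ).toBasis (Mlin v w),
    Matrix.det_fin_two]
  simp only [LinearMap.toMatrix_apply, OrthonormalBasis.coe_toBasis,
    OrthonormalBasis.coe_toBasis_repr_apply, EuclideanSpace.basisFun_apply,
    EuclideanSpace.basisFun_repr, Mlin, LinearMap.coe_mk, AddHom.coe_mk,
    EuclideanSpace.single_apply]
  simp only [PiLp.add_apply, PiLp.smul_apply, PiLp.neg_apply, smul_eq_mul]
  norm_num
  ring

lemma map_affine_volume (c : Euc 2) {v w : Euc 2} (hvw : LinearIndependent ℝ ![v, w]) :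
    Measure.map (fun p : ℝ × ℝ => c + (p.1 • v + p.2 • (-w))) volume =
      (ENNReal.ofReal |v 0 * w 1 - v 1 * w 0|)⁻¹ • volume := by
  have hd : v 0 * w 1 - v 1 * w 0 ≠ 0 := mydet_ne_zero hvw
  have hdet : LinearMap.det (Mlin v w) ≠ 0 := by
    rw [det_Mlin]; exact neg_ne_zero.mpr hd
  have hE : MeasurePreserving
      ((MeasurableEquiv.toLp 2 (Fin 2 → ℝ)) ∘ (MeasurableEquiv.finTwoArrow).symm)
      (volume : Measure (ℝ × ℝ)) (volume : Measure (Euc 2)) :=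
    (MeasurePreserving.symm _ (EuclideanSpace.volume_preserving_symm_measurableEquiv_toLp (Fin 2))).comp
      (MeasurePreserving.symm _ (volume_preserving_finTwoArrow ℝ))
  have hfun : (fun p : ℝ × ℝ => c + (p.1 • v + p.2 • (-w))) =
      ((fun x : Euc 2 => c + x) ∘ (Mlin v w)) ∘
        ((MeasurableEquiv.toLp 2 (Fin 2 → ℝ)) ∘ (MeasurableEquiv.finTwoArrow).symm) := by
    funext p
    simp only [Function.comp_apply, MeasurableEquiv.finTwoArrow_symm_apply,
      MeasurableEquiv.coe_toLp, MeasurableEquiv.symm_mk, MeasurableEquiv.coe_mk, Mlin,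
      LinearMap.coe_mk, AddHom.coe_mk]
    simp
  have hM : Measurable (Mlin v w) := (Mlin v w).continuous_of_finiteDimensional.measurable
  have hadd : Measurable (fun x : Euc 2 => c + x) := measurable_const_add c
  rw [hfun, ← Measure.map_map (hadd.comp hM) (hE.measurable),
    hE.map_eq,
    ← Measure.map_map hadd hM,
    Measure.map_linearMap_addHaar_eq_smul_addHaar volume hdet,
    Measure.map_smul, map_add_left_eq_self, det_Mlin]
  congr 1
  rw [abs_inv, abs_neg, ← ENNReal.ofReal_inv_of_pos (abs_pos.mpr hd)]

/-- For linearly independent `v, w`, the convolution `μ_{x₀,v} * (μ_{y₀,w})~` is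
`|det(v,w)|⁻¹` times Lebesgue measure restricted to `(x₀-y₀) + Q_{v,-w}`. -/
theorem segMeasure_conv_not_parallel
    (x0 y0 v w : Euc 2) (hvw : LinearIndependent ℝ ![v, w]) :
    ∀ E : Set (Euc 2), MeasurableSet E →
      mconv (segMeasure x0 v) (mneg (segMeasure y0 w)) E =
        (ENNReal.ofReal |v 0 * w 1 - v 1 * w 0|)⁻¹ *
          volume (E ∩ ((fun z => (x0 - y0) + z) '' Qpar v (-w))) := by
  intro E hE
  set c : Euc 2 := x0 - y0 with hc
  set L : ℝ × ℝ → Euc 2 := fun p => p.1 • v + p.2 • (-w) with hLdef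
  set φ : ℝ × ℝ → Euc 2 := fun p => c + L p with hφdef
  set S : Set (ℝ × ℝ) := Set.Icc (0:ℝ) 1 ×ˢ Set.Icc (0:ℝ) 1 with hS
  have hLcont : Continuous L :=
    (continuous_fst.smul continuous_const).add (continuous_snd.smul continuous_const)
  have hφcont : Continuous φ := continuous_const.add hLcont
  have hφm : Measurable φ := hφcont.measurable
  have hf : Measurable (fun t : ℝ => x0 + t • v) := by fun_prop
  have hf2 : Measurable (fun t : ℝ => y0 + t • w) := by fun_prop
  have hg : Measurable (fun t : ℝ => -(y0 + t • w)) := hf2.neg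
  -- Step 1: identify the convolution as a pushforward of planar Lebesgue restricted to S
  have hconv : mconv (segMeasure x0 v) (mneg (segMeasure y0 w)) =
      Measure.map φ ((volume : Measure (ℝ × ℝ)).restrict S) := by
    rw [mconv, segMeasure, mneg, segMeasure,
      Measure.map_map measurable_neg hf2]
    have : ((fun x : Euc 2 => -x) ∘ fun t : ℝ => y0 + t • w) = fun t : ℝ => -(y0 + t • w) :=
      rfl
    rw [this, Measure.map_prod_map _ _ hf hg,
      Measure.map_map (show Measurable (fun p : Euc 2 × Euc 2 => p.1 + p.2) from
        measurable_fst.add measurable_snd) (hf.prodMap hg),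
      Measure.prod_restrict, ← Measure.volume_eq_prod ℝ ℝ]
    congr 1
    funext p
    show (x0 + p.1 • v) + -(y0 + p.2 • w) = c + (p.1 • v + p.2 • (-w))
    rw [hc]; module
  -- Step 2: image set identification
  have himg : (fun z => c + z) '' Qpar v (-w) = φ '' S := by
    rw [Qpar, Set.image_image]
  have himgmeas : MeasurableSet (φ '' S) :=
    (((isCompact_Icc.prod isCompact_Icc).image hφcont).isClosed).measurableSet
  have hinj : Function.Injective φ := fun p q h => by
    have : L p = L q := by
      have := h
      simpa [hφdef] using this
    exact myL_inj hvw this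
  have hset : φ ⁻¹' E ∩ S = φ ⁻¹' (E ∩ φ '' S) := by
    rw [Set.preimage_inter, Function.Injective.preimage_image hinj]
  rw [hconv, Measure.map_apply hφm hE, Measure.restrict_apply (hφm hE), hset,
    ← Measure.map_apply hφm (hE.inter himgmeas)]
  have hmapeq : Measure.map φ volume =
      (ENNReal.ofReal |v 0 * w 1 - v 1 * w 0|)⁻¹ • volume := map_affine_volume c hvw
  rw [hmapeq, Measure.smul_apply, smul_eq_mul, himg]
end
end

section
/- Let N ≥ 3 and let v₁, …, v_N be nonzero vectors in ℝ² such that no closed half-plane contains all of them, i.e. for every nonzero u ∈ ℝ² there exists i with ⟨u, vᵢ⟩ < 0. Then the union ⋃_{1 ≤ i ≠ j ≤ N} Q_{vᵢ, vⱼ} contains an open neighborhood of the origin: there exists ε > 0 with B(0, ε) ⊆ ⋃_{i ≠ j} Q_{vᵢ, vⱼ}. -/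
open MeasureTheory Metric Set ENNReal

noncomputable section

/- ### Auxiliary lemmas -/

private lemma aux_L1 {c1 s1 c s : ℝ} (h1 : c1^2+s1^2 = 1) (h2 : c^2+s^2 = 1)
    (hs1 : 0 < s1) (hs : 0 < s) (hc : c ≤ c1) : 0 ≤ c1 * s - s1 * c := by
  rcases le_or_gt 0 c with h | h
  · nlinarith [mul_pos hs1 hs, sq_nonneg (c1*s - s1*c), sq_nonneg (c1*s + s1*c),
      mul_nonneg h (sub_nonneg.2 hc)]
  · rcases le_or_gt 0 c1 with h' | h'
    · nlinarith [mul_pos hs1 (neg_pos.2 h), mul_nonneg h' hs.le]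
    · nlinarith [mul_pos hs1 (neg_pos.2 h), sq_nonneg (c1*s - s1*c), sq_nonneg (c1*s + s1*c)]

private lemma aux_K {c1 s1 c2 s2 : ℝ} (h1 : c1^2+s1^2 = 1) (h2 : c2^2+s2^2 = 1)
    (hs1 : 0 < s1) (hs2 : s2 < 0) (hD : 0 ≤ c1*s2 - s1*c2) : c1 + c2 ≤ 0 := by
  by_contra h
  push_neg at h
  rcases le_or_gt 0 c2 with hc2 | hc2
  · have hc1 : c1 ≤ 0 := by nlinarith [mul_nonneg hs1.le hc2]
    rcases eq_or_lt_of_le hc1 with he | hc1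
    · nlinarith [mul_pos hs1 (by linarith : (0:ℝ) < c2)]
    · have h6 : 0 < c1*(s1+s2) := by
        nlinarith [mul_lt_mul_of_pos_left (show -c1 < c2 by linarith) hs1]
      have h7 : s1 + s2 < 0 := by
        by_contra h7; push_neg at h7; nlinarith [mul_nonneg h7 (neg_pos.2 hc1).le]
      nlinarith [mul_self_lt_mul_self (by linarith : (0:ℝ) ≤ -c1) (by linarith : -c1 < c2),
        mul_self_lt_mul_self hs1.le (by linarith : s1 < -s2)]
  · nlinarith [mul_pos (by linarith : (0:ℝ) < c1) (neg_pos.2 hs2), mul_pos hs1 (neg_pos.2 hc2)]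

private lemma aux_key {c1 s1 c2 s2 c s : ℝ} (h1 : c1^2+s1^2 = 1) (h2 : c2^2+s2^2 = 1)
    (hz : c^2+s^2 = 1)
    (hs1 : 0 < s1) (hs2 : s2 < 0) (hD : 0 ≤ c1*s2 - s1*c2) (hs : 0 < s) (hc : c ≤ c1) :
    0 ≤ (c1+c2)*c + (s1+s2)*s := by
  have hmu := aux_L1 h1 hz hs1 hs hc
  have hK := aux_K h1 h2 hs1 hs2 hD
  have hdot : 0 ≤ 1 + c1*c2 + s1*s2 := by nlinarith [sq_nonneg (c1+c2), sq_nonneg (s1+s2)]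
  have hid : ((c1+c2)*c + (s1+s2)*s) * s1
      = s*(1+c1*c2+s1*s2) + (c1*s - s1*c)*(-(c1+c2)) := by linear_combination s * h1
  have hnn : 0 ≤ ((c1+c2)*c + (s1+s2)*s) * s1 := by
    rw [hid]
    exact add_nonneg (mul_nonneg hs.le hdot) (mul_nonneg hmu (by linarith))
  by_contra hT
  push_neg at hT
  nlinarith [mul_pos (neg_pos.2 hT) hs1]

private lemma aux_core_unit {N : ℕ} (c s : Fin N → ℝ) (hu : ∀ i, (c i)^2 + (s i)^2 = 1)
    (H : ∀ p q : ℝ, p ≠ 0 ∨ q ≠ 0 → ∃ i, p * c i + q * s i < 0) :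
    ∃ i j, c i * s j - s i * c j ≠ 0 ∧
      ∃ t u : ℝ, 0 ≤ t ∧ 0 ≤ u ∧ t * c i + u * c j = 1 ∧ t * s i + u * s j = 0 := by
  classical
  by_cases hA : ∃ i, s i = 0 ∧ 0 < c i
  · obtain ⟨i, hsi, hci⟩ := hA
    obtain ⟨j, hj⟩ := H 0 1 (Or.inr one_ne_zero)
    have hsj : s j < 0 := by linarith [hj]
    refine ⟨i, j, ?_, 1 / c i, 0, by positivity, le_refl 0, ?_, ?_⟩
    · rw [hsi]; simp only [zero_mul, sub_zero]
      exact mul_ne_zero (ne_of_gt hci) (ne_of_lt hsj)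
    · field_simp
      ring
    · rw [hsi]; ring
  · push_neg at hA
    have hA' : ∀ i, s i = 0 → c i ≤ 0 := hA
    obtain ⟨a0, ha0⟩ := H 0 (-1) (Or.inr (by norm_num))
    have hsa0 : 0 < s a0 := by linarith [ha0]
    obtain ⟨b0, hb0⟩ := H 0 1 (Or.inr one_ne_zero)
    have hsb0 : s b0 < 0 := by linarith [hb0]
    set P : Finset (Fin N) := Finset.univ.filter (fun i => 0 < s i) with hP
    set Q : Finset (Fin N) := Finset.univ.filter (fun i => s i < 0) with hQ
    obtain ⟨a, haP, hamax⟩ := Finset.exists_max_image P c ⟨a0, by simp [hP, hsa0]⟩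
    obtain ⟨b, hbQ, hbmax⟩ := Finset.exists_max_image Q c ⟨b0, by simp [hQ, hsb0]⟩
    have hsa : 0 < s a := by simpa [hP] using haP
    have hsb : s b < 0 := by simpa [hQ] using hbQ
    have hmaxP : ∀ i, 0 < s i → c i ≤ c a := fun i hi => hamax i (by simp [hP, hi])
    have hmaxQ : ∀ i, s i < 0 → c i ≤ c b := fun i hi => hbmax i (by simp [hQ, hi])
    have hD : c a * s b - s a * c b < 0 := by
      by_contra hD'
      push_neg at hD'
      by_cases hdeg : c a + c b = 0 ∧ s a + s b = 0
      · obtain ⟨i, hi⟩ := H (-(s a)) (c a) (Or.inl (by simpa using ne_of_gt hsa))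
        have : 0 ≤ -(s a) * c i + c a * s i := by
          rcases lt_trichotomy (s i) 0 with h | h | h
          · have := aux_L1 (c1 := -(c i)) (s1 := -(s i)) (c := c a) (s := s a)
              (by have := hu i; nlinarith) (hu a) (by linarith) hsa
              (by have := hmaxQ i h; linarith [hdeg.1])
            linarith [this]
          · have hci := hA' i h
            rw [h]
            nlinarith [mul_nonneg hsa.le (neg_nonneg.2 hci)]
          · have := aux_L1 (hu a) (hu i) hsa h (hmaxP i h)
            linarith
        linarith
      · have hpq : c a + c b ≠ 0 ∨ s a + s b ≠ 0 := by
          by_contra hcon; push_neg at hcon; exact hdeg ⟨hcon.1, hcon.2⟩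
        obtain ⟨i, hi⟩ := H (c a + c b) (s a + s b) hpq
        have : 0 ≤ (c a + c b) * c i + (s a + s b) * s i := by
          rcases lt_trichotomy (s i) 0 with h | h | h
          · have := aux_key (c1 := c b) (s1 := -(s b)) (c2 := c a) (s2 := -(s a))
              (c := c i) (s := -(s i)) (by have := hu b; nlinarith) (by have := hu a; nlinarith)
              (by have := hu i; nlinarith) (by linarith) (by linarith)
              (by nlinarith) (by linarith) (hmaxQ i h)
            nlinarith [this]
          · have hci : c i ≤ 0 := hA' i h
            have hK := aux_K (hu a) (hu b) hsa hsb hD'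
            rw [h]
            nlinarith [mul_nonneg (neg_nonneg.2 hK) (neg_nonneg.2 hci)]
          · exact aux_key (hu a) (hu b) (hu i) hsa hsb hD' h (hmaxP i h)
        linarith
    refine ⟨a, b, ne_of_lt hD, s b / (c a * s b - s a * c b), -(s a) / (c a * s b - s a * c b),
      le_of_lt (div_pos_of_neg_of_neg hsb hD), le_of_lt (div_pos_of_neg_of_neg (by linarith) hD),
      ?_, ?_⟩
    · rw [div_mul_eq_mul_div, div_mul_eq_mul_div, ← add_div,
        div_eq_one_iff_eq (ne_of_lt hD)]
      ring
    · rw [div_mul_eq_mul_div, div_mul_eq_mul_div, ← add_div]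
      have h9 : s b * s a + -(s a) * s b = 0 := by ring
      rw [h9, zero_div]

private lemma aux_core {N : ℕ} (c s : Fin N → ℝ) (hnz : ∀ i, 0 < (c i)^2 + (s i)^2)
    (H : ∀ p q : ℝ, p ≠ 0 ∨ q ≠ 0 → ∃ i, p * c i + q * s i < 0) :
    ∃ i j, c i * s j - s i * c j ≠ 0 ∧
      ∃ t u : ℝ, 0 ≤ t ∧ 0 ≤ u ∧ t * c i + u * c j = 1 ∧ t * s i + u * s j = 0 := by
  set r : Fin N → ℝ := fun i => Real.sqrt ((c i)^2 + (s i)^2) with hr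
  have hrpos : ∀ i, 0 < r i := fun i => Real.sqrt_pos.2 (hnz i)
  have hrsq : ∀ i, (r i)^2 = (c i)^2 + (s i)^2 := fun i => Real.sq_sqrt (hnz i).le
  have hu : ∀ i, (c i / r i)^2 + (s i / r i)^2 = 1 := by
    intro i
    have h9 := hrsq i
    field_simp [(hrpos i).ne']
    linarith
  have H' : ∀ p q : ℝ, p ≠ 0 ∨ q ≠ 0 → ∃ i, p * (c i / r i) + q * (s i / r i) < 0 := by
    intro p q hpq
    obtain ⟨i, hi⟩ := H p q hpq
    refine ⟨i, ?_⟩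
    have : p * (c i / r i) + q * (s i / r i) = (p * c i + q * s i) / r i := by ring
    rw [this]
    exact div_neg_of_neg_of_pos hi (hrpos i)
  obtain ⟨i, j, hdet, t, u, ht, hu', h1, h2⟩ := aux_core_unit _ _ hu H'
  refine ⟨i, j, ?_, t / r i, u / r j, div_nonneg ht (hrpos i).le, div_nonneg hu' (hrpos j).le,
    ?_, ?_⟩
  · intro h0
    apply hdet
    have : c i / r i * (s j / r j) - s i / r i * (c j / r j)
        = (c i * s j - s i * c j) / (r i * r j) := by ring
    rw [this, h0, zero_div]
  · calc t / r i * c i + u / r j * c j = t * (c i / r i) + u * (c j / r j) := by ring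
      _ = 1 := h1
  · calc t / r i * s i + u / r j * s j = t * (s i / r i) + u * (s j / r j) := by ring
      _ = 0 := h2

/-- determinant of two vectors in `Euc 2` -/
private def det2 (y z : Euc 2) : ℝ := y 0 * z 1 - y 1 * z 0

private lemma euc_ext {y z : Euc 2} (h0 : y 0 = z 0) (h1 : y 1 = z 1) : y = z := by
  ext i; fin_cases i <;> assumption

private lemma euc_inner (y z : Euc 2) : (inner ℝ y z : ℝ) = y 0 * z 0 + y 1 * z 1 := by
  simp [PiLp.inner_apply, Fin.sum_univ_two, RCLike.inner_apply]
  ring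

private lemma euc_nz_coord {y : Euc 2} (h : y ≠ 0) : y 0 ≠ 0 ∨ y 1 ≠ 0 := by
  by_contra hc
  push_neg at hc
  exact h (by ext i; fin_cases i <;> simp [hc.1, hc.2])

private lemma euc_norm_sq (x : Euc 2) : ‖x‖^2 = x 0^2 + x 1^2 := by
  rw [EuclideanSpace.norm_eq, Real.sq_sqrt (by positivity)]
  simp [Fin.sum_univ_two, sq_abs]

private lemma euc_abs_le_norm (x : Euc 2) : |x 0| ≤ ‖x‖ ∧ |x 1| ≤ ‖x‖ := by
  have h := euc_norm_sq x
  constructor <;>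
    nlinarith [norm_nonneg x, abs_nonneg (x 0), abs_nonneg (x 1), sq_abs (x 0), sq_abs (x 1),
      sq_nonneg (x 0), sq_nonneg (x 1)]

/-- mk a vector in Euc 2 -/
private noncomputable def euc2 (a b : ℝ) : Euc 2 := (WithLp.equiv 2 (Fin 2 → ℝ)).symm ![a, b]

private lemma euc2_0 (a b : ℝ) : euc2 a b 0 = a := rfl
private lemma euc2_1 (a b : ℝ) : euc2 a b 1 = b := rfl

/-- If `N ≥ 3` nonzero vectors in ℝ² are not all contained in any closed half-plane,
then the union of the parallelograms `Q_{vᵢ,vⱼ}`, `i ≠ j`, covers a neighborhood of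
the origin. -/
theorem parallelograms_cover_origin
    (N : ℕ) (hN : 3 ≤ N) (v : Fin N → Euc 2) (hv : ∀ i, v i ≠ 0)
    (hhalf : ∀ u : Euc 2, u ≠ 0 → ∃ i, (inner ℝ u (v i) : ℝ) < 0) :
    ∃ ε : ℝ, 0 < ε ∧
      Metric.ball (0 : Euc 2) ε ⊆ ⋃ (i) (j) (_ : i ≠ j), Qpar (v i) (v j) := by
  classical
  -- Step 1: an independent pair exists
  have hpair : ∃ p : Fin N × Fin N, det2 (v p.1) (v p.2) ≠ 0 := by
    by_contra hc
    push_neg at hc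
    have i0 : Fin N := ⟨0, by omega⟩
    set w := euc2 (-(v i0 1)) (v i0 0) with hw
    have hwne : w ≠ 0 := by
      intro h0
      rcases euc_nz_coord (hv i0) with h | h
      · exact h (by have := congrFun (congrArg (fun (y : Euc 2) => (y : Fin 2 → ℝ)) h0) 1; simpa [hw, euc2_1] using this)
      · exact h (by have := congrFun (congrArg (fun (y : Euc 2) => (y : Fin 2 → ℝ)) h0) 0; simpa [hw, euc2_0] using this; )
    obtain ⟨i, hi⟩ := hhalf w hwne
    rw [euc_inner] at hi
    have hdet := hc (i0, i)
    simp only [det2] at hdet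
    rw [hw] at hi
    simp only [euc2_0, euc2_1] at hi
    nlinarith [hdet, hi]
  -- Step 2: cone covering
  have hcone : ∀ x : Euc 2, ∃ i j, det2 (v i) (v j) ≠ 0 ∧
      ∃ t u : ℝ, 0 ≤ t ∧ 0 ≤ u ∧ x = t • v i + u • v j := by
    intro x
    by_cases hx : x = 0
    · obtain ⟨p, hp⟩ := hpair
      exact ⟨p.1, p.2, hp, 0, 0, le_refl 0, le_refl 0, by simp [hx]⟩
    · have hR : 0 < x 0^2 + x 1^2 := by
        rcases euc_nz_coord hx with h | h
        · positivity
        · positivity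
      set cf : Fin N → ℝ := fun i => x 0 * v i 0 + x 1 * v i 1 with hcf
      set sf : Fin N → ℝ := fun i => x 0 * v i 1 - x 1 * v i 0 with hsf
      have hnz : ∀ i, 0 < (cf i)^2 + (sf i)^2 := by
        intro i
        have hvi : 0 < v i 0^2 + v i 1^2 := by
          rcases euc_nz_coord (hv i) with h | h
          · positivity
          · positivity
        have : (cf i)^2 + (sf i)^2 = (x 0^2 + x 1^2) * (v i 0^2 + v i 1^2) := by
          simp only [hcf, hsf]; ring
        rw [this]
        exact mul_pos hR hvi
      have H : ∀ p q : ℝ, p ≠ 0 ∨ q ≠ 0 → ∃ i, p * cf i + q * sf i < 0 := by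
        intro p q hpq
        set w := euc2 (p * x 0 - q * x 1) (p * x 1 + q * x 0) with hw
        have hwne : w ≠ 0 := by
          intro h0
          have h00 : p * x 0 - q * x 1 = 0 := by
            have := congrFun (congrArg (fun (y : Euc 2) => (y : Fin 2 → ℝ)) h0) 0
            simpa [hw, euc2_0] using this
          have h11 : p * x 1 + q * x 0 = 0 := by
            have := congrFun (congrArg (fun (y : Euc 2) => (y : Fin 2 → ℝ)) h0) 1
            simpa [hw, euc2_1] using this
          have hp0 : p = 0 := by
            have : p * (x 0^2 + x 1^2) = 0 := by linear_combination x 0 * h00 + x 1 * h11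
            exact (mul_eq_zero.1 this).resolve_right (ne_of_gt hR)
          have hq0 : q = 0 := by
            have : q * (x 0^2 + x 1^2) = 0 := by linear_combination x 0 * h11 - x 1 * h00
            exact (mul_eq_zero.1 this).resolve_right (ne_of_gt hR)
          rcases hpq with h | h
          · exact h hp0
          · exact h hq0
        obtain ⟨i, hi⟩ := hhalf w hwne
        rw [euc_inner] at hi
        rw [hw] at hi
        simp only [euc2_0, euc2_1] at hi
        refine ⟨i, ?_⟩
        simp only [hcf, hsf]
        nlinarith [hi]
      obtain ⟨i, j, hdet, t, u, ht, hu, h1, h2⟩ := aux_core cf sf hnz H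
      refine ⟨i, j, ?_, t * (x 0^2 + x 1^2), u * (x 0^2 + x 1^2),
        mul_nonneg ht hR.le, mul_nonneg hu hR.le, ?_⟩
      · intro h0
        apply hdet
        have : cf i * sf j - sf i * cf j = (x 0^2 + x 1^2) * det2 (v i) (v j) := by
          simp only [hcf, hsf, det2]; ring
        rw [this, h0, mul_zero]
      · simp only [hcf, hsf] at h1 h2
        have e0 : (x 0^2 + x 1^2) * (t * (x 0^2 + x 1^2) * v i 0 + u * (x 0^2 + x 1^2) * v j 0)
            = (x 0^2 + x 1^2) * x 0 := by
          linear_combination (x 0^2 + x 1^2) * x 0 * h1 - (x 0^2 + x 1^2) * x 1 * h2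
        have e1 : (x 0^2 + x 1^2) * (t * (x 0^2 + x 1^2) * v i 1 + u * (x 0^2 + x 1^2) * v j 1)
            = (x 0^2 + x 1^2) * x 1 := by
          linear_combination (x 0^2 + x 1^2) * x 1 * h1 + (x 0^2 + x 1^2) * x 0 * h2
        have w0 : t * (x 0^2 + x 1^2) * v i 0 + u * (x 0^2 + x 1^2) * v j 0 = x 0 :=
          mul_left_cancel₀ (ne_of_gt hR) e0
        have w1 : t * (x 0^2 + x 1^2) * v i 1 + u * (x 0^2 + x 1^2) * v j 1 = x 1 :=
          mul_left_cancel₀ (ne_of_gt hR) e1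
        refine euc_ext ?_ ?_
        · simp only [PiLp.add_apply, PiLp.smul_apply, smul_eq_mul]
          linarith [w0]
        · simp only [PiLp.add_apply, PiLp.smul_apply, smul_eq_mul]
          linarith [w1]
  -- Step 3: uniform epsilon
  set Pairs : Finset (Fin N × Fin N) :=
    Finset.univ.filter (fun p => det2 (v p.1) (v p.2) ≠ 0) with hPairsDef
  have hPairsNe : Pairs.Nonempty := by
    obtain ⟨p, hp⟩ := hpair
    exact ⟨p, by simp [hPairsDef, hp]⟩
  set Sf : Fin N × Fin N → ℝ :=
    fun p => |v p.1 0| + |v p.1 1| + |v p.2 0| + |v p.2 1| + 1 with hSf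
  have hSfpos : ∀ p, 0 < Sf p := by
    intro p
    simp only [hSf]
    positivity
  set ef : Fin N × Fin N → ℝ := fun p => |det2 (v p.1) (v p.2)| / Sf p with hef
  refine ⟨Pairs.inf' hPairsNe ef, ?_, ?_⟩
  · rw [Finset.lt_inf'_iff]
    intro p hp
    have hdp : det2 (v p.1) (v p.2) ≠ 0 := by
      simpa [hPairsDef] using hp
    exact div_pos (abs_pos.2 hdp) (hSfpos p)
  · intro x hxball
    have hxn : ‖x‖ < Pairs.inf' hPairsNe ef := by
      rwa [mem_ball, dist_zero_right] at hxball
    obtain ⟨i, j, hdet, t, u, ht, hu, hx⟩ := hcone x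
    have hij : i ≠ j := by
      intro h
      apply hdet
      rw [h]; simp [det2]; ring
    have hpmem : (i, j) ∈ Pairs := by simp [hPairsDef, hdet]
    have hle : ef (i, j) ≤ Pairs.inf' hPairsNe ef → True := fun _ => trivial
    have hεle : Pairs.inf' hPairsNe ef ≤ ef (i, j) := Finset.inf'_le ef hpmem
    have hxS : ‖x‖ * Sf (i, j) < |det2 (v i) (v j)| := by
      have h1 : ‖x‖ < ef (i, j) := lt_of_lt_of_le hxn hεle
      calc ‖x‖ * Sf (i, j) < ef (i, j) * Sf (i, j) :=
            mul_lt_mul_of_pos_right h1 (hSfpos (i, j))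
        _ = |det2 (v i) (v j)| := by
            rw [hef]; exact div_mul_cancel₀ _ (ne_of_gt (hSfpos (i, j)))
    -- coordinates of hx
    have hx0 : x 0 = t * v i 0 + u * v j 0 := by
      rw [hx]; simp only [PiLp.add_apply, PiLp.smul_apply, smul_eq_mul]
    have hx1 : x 1 = t * v i 1 + u * v j 1 := by
      rw [hx]; simp only [PiLp.add_apply, PiLp.smul_apply, smul_eq_mul]
    obtain ⟨habs0, habs1⟩ := euc_abs_le_norm x
    -- bound t
    have hbt : t * det2 (v i) (v j) = x 0 * v j 1 - x 1 * v j 0 := by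
      rw [hx0, hx1]; simp only [det2]; ring
    have hbu : u * det2 (v i) (v j) = -(x 0 * v i 1 - x 1 * v i 0) := by
      rw [hx0, hx1]; simp only [det2]; ring
    have hbound : ∀ y z : Euc 2, |y 0 * z 1 - y 1 * z 0| ≤ |y 0| * |z 1| + |y 1| * |z 0| := by
      intro y z
      calc |y 0 * z 1 - y 1 * z 0| ≤ |y 0 * z 1| + |y 1 * z 0| := abs_sub _ _
        _ = |y 0| * |z 1| + |y 1| * |z 0| := by rw [abs_mul, abs_mul]
    have ht1 : t < 1 := by
      have h1 : |t| * |det2 (v i) (v j)| = |x 0 * v j 1 - x 1 * v j 0| := by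
        rw [← abs_mul, hbt]
      have h2 : |x 0 * v j 1 - x 1 * v j 0| ≤ ‖x‖ * Sf (i, j) := by
        calc |x 0 * v j 1 - x 1 * v j 0| ≤ |x 0| * |v j 1| + |x 1| * |v j 0| := hbound x (v j)
          _ ≤ ‖x‖ * |v j 1| + ‖x‖ * |v j 0| :=
              add_le_add (mul_le_mul_of_nonneg_right habs0 (abs_nonneg _))
                (mul_le_mul_of_nonneg_right habs1 (abs_nonneg _))
          _ ≤ ‖x‖ * Sf (i, j) := by
              rw [show Sf (i, j) = |v i 0| + |v i 1| + |v j 0| + |v j 1| + 1 from rfl]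
              have hn := norm_nonneg x
              nlinarith [abs_nonneg (v i 0), abs_nonneg (v i 1)]
      have h3 : |t| * |det2 (v i) (v j)| < |det2 (v i) (v j)| := by
        calc |t| * |det2 (v i) (v j)| ≤ ‖x‖ * Sf (i, j) := h1 ▸ h2
          _ < |det2 (v i) (v j)| := hxS
      have h4 : |t| < 1 := by
        have hdpos : 0 < |det2 (v i) (v j)| := abs_pos.2 hdet
        by_contra h5
        push_neg at h5
        nlinarith
      calc t ≤ |t| := le_abs_self t
        _ < 1 := h4
    have hu1 : u < 1 := by
      have h1 : |u| * |det2 (v i) (v j)| = |x 0 * v i 1 - x 1 * v i 0| := by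
        rw [← abs_mul, hbu, abs_neg]
      have h2 : |x 0 * v i 1 - x 1 * v i 0| ≤ ‖x‖ * Sf (i, j) := by
        calc |x 0 * v i 1 - x 1 * v i 0| ≤ |x 0| * |v i 1| + |x 1| * |v i 0| := hbound x (v i)
          _ ≤ ‖x‖ * |v i 1| + ‖x‖ * |v i 0| :=
              add_le_add (mul_le_mul_of_nonneg_right habs0 (abs_nonneg _))
                (mul_le_mul_of_nonneg_right habs1 (abs_nonneg _))
          _ ≤ ‖x‖ * Sf (i, j) := by
              rw [show Sf (i, j) = |v i 0| + |v i 1| + |v j 0| + |v j 1| + 1 from rfl]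
              have hn := norm_nonneg x
              nlinarith [abs_nonneg (v j 0), abs_nonneg (v j 1)]
      have h3 : |u| * |det2 (v i) (v j)| < |det2 (v i) (v j)| := by
        calc |u| * |det2 (v i) (v j)| ≤ ‖x‖ * Sf (i, j) := h1 ▸ h2
          _ < |det2 (v i) (v j)| := hxS
      have h4 : |u| < 1 := by
        have hdpos : 0 < |det2 (v i) (v j)| := abs_pos.2 hdet
        by_contra h5
        push_neg at h5
        nlinarith
      calc u ≤ |u| := le_abs_self u
        _ < 1 := h4
    refine Set.mem_iUnion.2 ⟨i, Set.mem_iUnion.2 ⟨j, Set.mem_iUnion.2 ⟨hij, ?_⟩⟩⟩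
    exact ⟨(t, u), ⟨⟨ht, ht1.le⟩, ⟨hu, hu1.le⟩⟩, hx.symm⟩

end
end

section
/- Let γ : ℝ → ℝ² be a smooth closed planar curve of length L > 0 with positive curvature, parametrized by arc length. Then there exists δ₀ > 0 such that for every interval I ⊆ ℝ of length less than δ₀, the map Γ(s,t) = γ(s) − γ(t) is injective on (I × I) \ {(s,s) : s ∈ I}; that is, if s, t, s′, t′ ∈ I with s ≠ t and s′ ≠ t′ satisfy γ(s) − γ(t) = γ(s′) − γ(t′), then s = s′ and t = t′. -/
open MeasureTheory Metric Set ENNReal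

noncomputable section

section ChordAux

open Set intervalIntegral

/-- Rotation by 90 degrees in the plane. -/
def Jrot (x : Euc 2) : Euc 2 := (WithLp.equiv 2 (Fin 2 → ℝ)).symm ![-(x 1), x 0]

lemma Jrot_zero (x : Euc 2) : (Jrot x) 0 = -(x 1) := by simp [Jrot]
lemma Jrot_one (x : Euc 2) : (Jrot x) 1 = x 0 := by simp [Jrot]
lemma inner_coords (x y : Euc 2) : (inner ℝ x y : ℝ) = x 0 * y 0 + x 1 * y 1 := by
  simp [PiLp.inner_apply, Fin.sum_univ_two, RCLike.inner_apply]; ring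
lemma norm_sq_coords (x : Euc 2) : ‖x‖^2 = x 0 ^2 + x 1 ^2 := by
  rw [← real_inner_self_eq_norm_sq, inner_coords]; ring

lemma inner_Jrot_Jrot (x y : Euc 2) : (inner ℝ (Jrot x) (Jrot y) : ℝ) = inner ℝ x y := by
  simp [inner_coords, Jrot_zero, Jrot_one]; try ring
lemma inner_Jrot_left (x y : Euc 2) : (inner ℝ (Jrot x) y : ℝ) = -(inner ℝ x (Jrot y) : ℝ) := by
  simp [inner_coords, Jrot_zero, Jrot_one]; try ring
lemma inner_sq_add_sq (x w : Euc 2) :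
    (inner ℝ x w : ℝ)^2 + (inner ℝ x (Jrot w) : ℝ)^2 = ‖x‖^2 * ‖w‖^2 := by
  simp [inner_coords, Jrot_zero, Jrot_one, norm_sq_coords]; ring
lemma perp_decomp (x w : Euc 2) (hw : ‖w‖ = 1) (hx : (inner ℝ x w : ℝ) = 0) :
    x = (inner ℝ x (Jrot w) : ℝ) • Jrot w := by
  have hw2 : w 0 ^2 + w 1 ^2 = 1 := by rw [← norm_sq_coords, hw]; norm_num
  rw [inner_coords] at hx
  have h0 : ∀ i, x i = ((inner ℝ x (Jrot w) : ℝ) • Jrot w) i := by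
    intro i
    have : ((inner ℝ x (Jrot w) : ℝ) • Jrot w) i = (inner ℝ x (Jrot w) : ℝ) * (Jrot w) i := rfl
    rw [this, inner_coords]
    fin_cases i
    · simp only [Fin.isValue, Fin.zero_eta, id_eq, Jrot_zero, Jrot_one]
      linear_combination (-(x 0)) * hw2 + w 0 * hx
    · simp only [Fin.isValue, Fin.mk_one, id_eq, Jrot_zero, Jrot_one]
      linear_combination (-(x 1)) * hw2 + w 1 * hx
  exact PiLp.ext h0

lemma chord_core {a b p q r w : ℝ} {h g : ℝ → ℝ} (hc : Continuous h) (gc : Continuous g)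
    (hpos : ∀ u ∈ Icc a b, 0 < h u)
    (mono : StrictMonoOn (fun u => g u / h u) (Icc a b))
    (hp : p ∈ Icc a b) (hq : q ∈ Icc a b) (hr : r ∈ Icc a b) (hw : w ∈ Icc a b)
    (h1 : p < q) (h2 : q ≤ r) (h3 : r < w)
    (e1 : (∫ u in p..q, h u) = ∫ u in r..w, h u)
    (e2 : (∫ u in p..q, g u) = ∫ u in r..w, g u) : False := by
  set φ : ℝ → ℝ := fun u => g u / h u with hφ
  have hsub1 : Icc p q ⊆ Icc a b := Icc_subset_Icc hp.1 hq.2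
  have hsub2 : Icc r w ⊆ Icc a b := Icc_subset_Icc hr.1 hw.2
  have A : (0:ℝ) < ∫ u in p..q, h u :=
    intervalIntegral_pos_of_pos_on (hc.intervalIntegrable p q)
      (fun x hx => hpos x (hsub1 (Ioo_subset_Icc_self hx))) h1
  have step1 : (∫ u in p..q, g u) < ∫ u in p..q, φ q * h u := by
    apply integral_lt_integral_of_continuousOn_of_le_of_exists_lt h1
      gc.continuousOn (continuous_const.mul hc).continuousOn
    · intro x hx
      have hx' : x ∈ Icc a b := hsub1 ⟨le_of_lt hx.1, hx.2⟩
      have hxle : φ x ≤ φ q := mono.monotoneOn hx' hq hx.2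
      exact (div_le_iff₀ (hpos x hx')).mp hxle
    · refine ⟨p, ⟨le_refl p, h1.le⟩, ?_⟩
      have := mono hp hq h1
      exact (div_lt_iff₀ (hpos p hp)).mp this
  have step3 : (∫ u in r..w, φ r * h u) ≤ ∫ u in r..w, g u := by
    apply integral_mono_on h3.le ((continuous_const.mul hc).intervalIntegrable r w)
      (gc.intervalIntegrable r w)
    intro x hx
    have hx' : x ∈ Icc a b := hsub2 hx
    have : φ r ≤ φ x := mono.monotoneOn hr hx' hx.1
    exact (le_div_iff₀ (hpos x hx')).mp this
  rw [intervalIntegral.integral_const_mul] at step1 step3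
  have hqr : φ q ≤ φ r := mono.monotoneOn hq hr h2
  have h5 := mul_le_mul_of_nonneg_right hqr A.le
  have h6 : φ r * ∫ u in p..q, h u = φ r * ∫ u in r..w, h u := by rw [e1]
  linarith [step1, h5, h6, step3, e2]

lemma chord_middle {a b t t' s s' : ℝ} {h g : ℝ → ℝ} (hc : Continuous h) (gc : Continuous g)
    (hpos : ∀ u ∈ Icc a b, 0 < h u)
    (mono : StrictMonoOn (fun u => g u / h u) (Icc a b))
    (ht : t ∈ Icc a b) (ht' : t' ∈ Icc a b) (hs : s ∈ Icc a b) (hs' : s' ∈ Icc a b)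
    (h1 : t < t') (h2 : s < s') (h3 : t < s)
    (e1 : (∫ u in t..t', h u) = ∫ u in s..s', h u)
    (e2 : (∫ u in t..t', g u) = ∫ u in s..s', g u) : False := by
  rcases le_or_gt t' s with hc1 | hc1
  · exact chord_core hc gc hpos mono ht ht' hs hs' h1 hc1 h2 e1 e2
  · -- s < t' : cancel the common part [s, t']
    have add1 : ∀ (f : ℝ → ℝ), Continuous f →
        (∫ u in t..s, f u) + ∫ u in s..t', f u = ∫ u in t..t', f u := fun f hf =>
      integral_add_adjacent_intervals (hf.intervalIntegrable t s) (hf.intervalIntegrable s t')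
    have add2 : ∀ (f : ℝ → ℝ), Continuous f →
        (∫ u in s..t', f u) + ∫ u in t'..s', f u = ∫ u in s..s', f u := fun f hf =>
      integral_add_adjacent_intervals (hf.intervalIntegrable s t') (hf.intervalIntegrable t' s')
    have e1' : (∫ u in t..s, h u) = ∫ u in t'..s', h u := by
      have := add1 h hc; have := add2 h hc; linarith
    have e2' : (∫ u in t..s, g u) = ∫ u in t'..s', g u := by
      have := add1 g gc; have := add2 g gc; linarith
    have hpos2 : (0:ℝ) < ∫ u in t..s, h u :=
      intervalIntegral_pos_of_pos_on (hc.intervalIntegrable t s)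
        (fun x hx => hpos x ((Icc_subset_Icc ht.1 hs.2) (Ioo_subset_Icc_self hx))) h3
    have h4 : t' < s' := by
      by_contra hcon
      push_neg at hcon
      have : (0:ℝ) ≤ ∫ u in s'..t', h u :=
        integral_nonneg hcon (fun u hu =>
          (hpos u ((Icc_subset_Icc hs'.1 ht'.2) hu)).le)
      have h5 : (∫ u in t'..s', h u) = -∫ u in s'..t', h u := integral_symm s' t'
      linarith [e1' ▸ hpos2]
    exact chord_core hc gc hpos mono ht hs ht' hs' h3 hc1.le h4 e1' e2'

lemma chord_key {a b : ℝ} {h g : ℝ → ℝ} (hc : Continuous h) (gc : Continuous g)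
    (hpos : ∀ u ∈ Icc a b, 0 < h u)
    (mono : StrictMonoOn (fun u => g u / h u) (Icc a b))
    {s t s' t' : ℝ} (hs : s ∈ Icc a b) (ht : t ∈ Icc a b)
    (hs' : s' ∈ Icc a b) (ht' : t' ∈ Icc a b) (hst : s ≠ t)
    (e1 : (∫ u in t..s, h u) = ∫ u in t'..s', h u)
    (e2 : (∫ u in t..s, g u) = ∫ u in t'..s', g u) : s = s' ∧ t = t' := by
  have hint : ∀ (f : ℝ → ℝ), Continuous f → ∀ x y z : ℝ,
      (∫ u in x..y, f u) + ∫ u in y..z, f u = ∫ u in x..z, f u := fun f hf x y z =>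
    intervalIntegral.integral_add_adjacent_intervals (hf.intervalIntegrable x y)
      (hf.intervalIntegrable y z)
  have pos : ∀ x ∈ Icc a b, ∀ y ∈ Icc a b, x < y → (0:ℝ) < ∫ u in x..y, h u := by
    intro x hx y hy hxy
    exact intervalIntegral.intervalIntegral_pos_of_pos_on (hc.intervalIntegrable x y)
      (fun u hu => hpos u ((Icc_subset_Icc hx.1 hy.2) (Ioo_subset_Icc_self hu))) hxy
  have d1 : (∫ u in t..t', h u) = ∫ u in s..s', h u := by
    have a1 := hint h hc t t' s; have a2 := hint h hc t' s s'; linarith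
  have d2 : (∫ u in t..t', g u) = ∫ u in s..s', g u := by
    have a1 := hint g gc t t' s; have a2 := hint g gc t' s s'; linarith
  have zeroiff : ∀ x ∈ Icc a b, ∀ y ∈ Icc a b, (∫ u in x..y, h u) = 0 → x = y := by
    intro x hx y hy hxy
    rcases lt_trichotomy x y with hl | hl | hl
    · exact absurd hxy (ne_of_gt (pos x hx y hy hl))
    · exact hl
    · have := pos y hy x hx hl
      have h5 : (∫ u in x..y, h u) = -∫ u in y..x, h u := intervalIntegral.integral_symm y x
      linarith
  rcases lt_trichotomy t t' with htt | htt | htt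
  · exfalso
    have hss : s < s' := by
      have hp := pos t ht t' ht' htt
      rcases lt_trichotomy s s' with hl | hl | hl
      · exact hl
      · exfalso; rw [hl] at d1; simp at d1; linarith
      · exfalso
        have := pos s' hs' s hs hl
        have h5 : (∫ u in s..s', h u) = -∫ u in s'..s, h u := intervalIntegral.integral_symm s' s
        linarith
    rcases lt_trichotomy t s with hts | hts | hts
    · exact chord_middle hc gc hpos mono ht ht' hs hs' htt hss hts d1 d2
    · exact hst hts.symm
    · exact chord_middle hc gc hpos mono hs hs' ht ht' hss htt hts d1.symm d2.symm
  · subst htt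
    refine ⟨?_, rfl⟩
    have : (∫ u in s..s', h u) = 0 := by simp [← d1]
    exact zeroiff s hs s' hs' this
  · exfalso
    have d1' : (∫ u in t'..t, h u) = ∫ u in s'..s, h u := by
      have q1 : (∫ u in t..t', h u) = -∫ u in t'..t, h u := intervalIntegral.integral_symm t' t
      have q2 : (∫ u in s..s', h u) = -∫ u in s'..s, h u := intervalIntegral.integral_symm s' s
      linarith
    have d2' : (∫ u in t'..t, g u) = ∫ u in s'..s, g u := by
      have q1 : (∫ u in t..t', g u) = -∫ u in t'..t, g u := intervalIntegral.integral_symm t' t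
      have q2 : (∫ u in s..s', g u) = -∫ u in s'..s, g u := intervalIntegral.integral_symm s' s
      linarith
    have hss : s' < s := by
      have hp := pos t' ht' t ht htt
      rcases lt_trichotomy s' s with hl | hl | hl
      · exact hl
      · exfalso; rw [hl] at d1'; simp at d1'; linarith
      · exfalso
        have := pos s hs s' hs' hl
        have h5 : (∫ u in s'..s, h u) = -∫ u in s..s', h u := intervalIntegral.integral_symm s s'
        linarith
    rcases lt_trichotomy t' s' with hts | hts | hts
    · exact chord_middle hc gc hpos mono ht' ht hs' hs htt hss hts d1' d2'
    · subst hts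
      have : (∫ u in t'..t, h u) - ∫ u in t'..s, h u = 0 := by rw [d1']; ring
      have a1 := hint h hc t' s t
      have hts2 : (∫ u in s..t, h u) = 0 := by linarith
      exact hst (zeroiff s hs t ht hts2)
    · exact chord_middle hc gc hpos mono hs' hs ht' ht hss htt hts d1'.symm d2'.symm

end ChordAux

/-- For a smooth closed planar curve of positive curvature parametrized by arc length,
there is `δ₀ > 0` such that on every interval of length less than `δ₀` the map
`Γ(s,t) = γ(s) - γ(t)` is injective off the diagonal. -/
theorem chord_map_locally_injective
    (L : ℝ) (hL : 0 < L) (γ : ℝ → Euc 2)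
    (hsmooth : ContDiff ℝ (⊤ : ℕ∞) γ)
    (hper : Function.Periodic γ L)
    (harc : ∀ s, ‖deriv γ s‖ = 1)
    (hcurv : ∀ s, deriv (deriv γ) s ≠ 0) :
    ∃ δ₀ : ℝ, 0 < δ₀ ∧ ∀ a b : ℝ, b - a < δ₀ →
      ∀ s ∈ Set.Icc a b, ∀ t ∈ Set.Icc a b, ∀ s' ∈ Set.Icc a b, ∀ t' ∈ Set.Icc a b,
        s ≠ t → s' ≠ t' → γ s - γ t = γ s' - γ t' → s = s' ∧ t = t' := by
  have h1 : ContDiff ℝ ((⊤ : ℕ∞) : WithTop ℕ∞) γ := hsmooth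
  have h2 := (contDiff_infty_iff_deriv.mp h1).2
  have h3 := (contDiff_infty_iff_deriv.mp h2).2
  have hγd : Differentiable ℝ γ := (contDiff_infty_iff_deriv.mp h1).1
  have hTd : Differentiable ℝ (deriv γ) := (contDiff_infty_iff_deriv.mp h2).1
  have Tcont : Continuous (deriv γ) := h2.continuous
  have Ncont : Continuous (deriv (deriv γ)) := h3.continuous
  have Tper : Function.Periodic (deriv γ) L := by
    intro x
    have h0 : (fun y => γ (y + L)) = γ := funext hper
    calc deriv γ (x + L) = deriv (fun y => γ (y + L)) x := (deriv_comp_add_const γ L x).symm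
      _ = deriv γ x := by rw [h0]
  have Nper : Function.Periodic (deriv (deriv γ)) L := by
    intro x
    have h0 : (fun y => deriv γ (y + L)) = deriv γ := funext Tper
    calc deriv (deriv γ) (x + L) = deriv (fun y => deriv γ (y + L)) x :=
          (deriv_comp_add_const (deriv γ) L x).symm
      _ = deriv (deriv γ) x := by rw [h0]
  have ftc : ∀ x y : ℝ, (∫ u in x..y, deriv γ u) = γ y - γ x := fun x y =>
    intervalIntegral.integral_deriv_eq_sub (fun u _ => hγd u) (Tcont.intervalIntegrable x y)
  have ftcT : ∀ x y : ℝ, (∫ u in x..y, deriv (deriv γ) u) = deriv γ y - deriv γ x := fun x y =>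
    intervalIntegral.integral_deriv_eq_sub (fun u _ => hTd u) (Ncont.intervalIntegrable x y)
  have orth : ∀ u : ℝ, (inner ℝ (deriv γ u) (deriv (deriv γ) u) : ℝ) = 0 := by
    intro u
    have hd := HasDerivAt.inner ℝ ((hTd u).hasDerivAt) ((hTd u).hasDerivAt)
    have hconst : (fun v : ℝ => (inner ℝ (deriv γ v) (deriv γ v) : ℝ)) = fun _ => (1:ℝ) := by
      funext v
      rw [real_inner_self_eq_norm_sq, harc v]; norm_num
    rw [hconst] at hd
    have h9 := hd.unique (hasDerivAt_const u (1:ℝ))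
    have h10 : (inner ℝ (deriv γ u) (deriv (deriv γ) u) : ℝ)
        = inner ℝ (deriv (deriv γ) u) (deriv γ u) := real_inner_comm _ _
    linarith [h9, h10]
  -- curvature
  set κ : ℝ → ℝ := fun u => (inner ℝ (deriv (deriv γ) u) (Jrot (deriv γ u)) : ℝ) with hκdef
  have hdecomp : ∀ u, deriv (deriv γ) u = κ u • Jrot (deriv γ u) := by
    intro u
    exact perp_decomp _ _ (harc u) (by rw [real_inner_comm]; exact orth u)
  have hκ0 : ∀ u, κ u ≠ 0 := by
    intro u h0
    exact hcurv u (by rw [hdecomp u, h0, zero_smul])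
  have κcont : Continuous κ := by
    have hcoord : ∀ (f : ℝ → Euc 2), Continuous f → ∀ i, Continuous fun u => f u i :=
      fun f hf i => (EuclideanSpace.proj i : Euc 2 →L[ℝ] ℝ).continuous.comp hf
    have hrw : κ = fun u => deriv (deriv γ) u 0 * (-(deriv γ u 1))
        + deriv (deriv γ) u 1 * deriv γ u 0 := by
      funext u
      rw [hκdef]
      simp only [inner_coords, Jrot_zero, Jrot_one]
    rw [hrw]
    exact (((hcoord _ Ncont 0).mul (hcoord _ Tcont 1).neg).add
      ((hcoord _ Ncont 1).mul (hcoord _ Tcont 0)))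
  -- sign
  obtain ⟨ε, hεκ⟩ : ∃ ε : ℝ, ∀ u, 0 < ε * κ u := by
    rcases (hκ0 0).lt_or_gt with hneg | hpos0
    · refine ⟨-1, fun u => ?_⟩
      rcases (hκ0 u).lt_or_gt with hu | hu
      · nlinarith
      · exfalso
        have hmem : (0:ℝ) ∈ uIcc (κ 0) (κ u) := by
          rw [Set.mem_uIcc]; left; exact ⟨hneg.le, hu.le⟩
        obtain ⟨z, _, hz⟩ := intermediate_value_uIcc (κcont.continuousOn (s := uIcc 0 u)) hmem
        exact hκ0 z hz
    · refine ⟨1, fun u => ?_⟩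
      rcases (hκ0 u).lt_or_gt with hu | hu
      · exfalso
        have hmem : (0:ℝ) ∈ uIcc (κ 0) (κ u) := by
          rw [Set.mem_uIcc]; right; exact ⟨hu.le, hpos0.le⟩
        obtain ⟨z, _, hz⟩ := intermediate_value_uIcc (κcont.continuousOn (s := uIcc 0 u)) hmem
        exact hκ0 z hz
      · nlinarith
  -- bound on curvature vector
  obtain ⟨C, hC⟩ := (isCompact_Icc (a := (0:ℝ)) (b := L)).exists_bound_of_continuousOn
    Ncont.continuousOn
  set M : ℝ := max C 1 with hMdef
  have hM1 : (1:ℝ) ≤ M := le_max_right _ _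
  have Mpos : (0:ℝ) < M := lt_of_lt_of_le one_pos hM1
  have hMb : ∀ u, ‖deriv (deriv γ) u‖ ≤ M := by
    intro u
    obtain ⟨y, hy, hEq⟩ := Nper.exists_mem_Ico₀ hL u
    rw [hEq]
    exact le_trans (hC y (Set.Ico_subset_Icc_self hy)) (le_max_left _ _)
  refine ⟨1/(2*M), by positivity, ?_⟩
  intro a b hab s hsm t htm s' hs'm t' ht'm hst hst' heq
  -- positivity of h
  have hposgen : ∀ u ∈ Set.Icc a b, (1:ℝ)/2 < (inner ℝ (deriv γ a) (deriv γ u) : ℝ) := by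
    intro u hu
    have hba : a ≤ b := le_trans hu.1 hu.2
    have hLip : ‖deriv γ u - deriv γ a‖ ≤ M * |u - a| := by
      have h1 := intervalIntegral.norm_integral_le_of_norm_le_const
        (f := deriv (deriv γ)) (a := a) (b := u) (C := M) (fun x _ => hMb x)
      rwa [ftcT a u] at h1
    have habs : |u - a| ≤ b - a := by
      rw [abs_le]; constructor <;> [linarith [hu.1, hu.2]; linarith [hu.2]]
    have h2 : M * |u - a| ≤ M * (b - a) := mul_le_mul_of_nonneg_left habs Mpos.le
    have h3 : M * (b - a) < M * (1/(2*M)) := mul_lt_mul_of_pos_left hab Mpos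
    have h4 : M * (1/(2*M)) = 1/2 := by field_simp
    have h5 : |(inner ℝ (deriv γ a) (deriv γ u - deriv γ a) : ℝ)|
        ≤ ‖deriv γ a‖ * ‖deriv γ u - deriv γ a‖ := abs_real_inner_le_norm _ _
    rw [harc a, one_mul] at h5
    have h6 : (inner ℝ (deriv γ a) (deriv γ u - deriv γ a) : ℝ)
        = inner ℝ (deriv γ a) (deriv γ u) - inner ℝ (deriv γ a) (deriv γ a) :=
      inner_sub_right _ _ _
    have h7 : (inner ℝ (deriv γ a) (deriv γ a) : ℝ) = 1 := by
      rw [real_inner_self_eq_norm_sq, harc a]; norm_num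
    have h8 := abs_le.mp h5
    linarith [h8.1, h8.2]
  have hpos : ∀ u ∈ Set.Icc a b, 0 < (inner ℝ (deriv γ a) (deriv γ u) : ℝ) :=
    fun u hu => lt_trans (by norm_num) (hposgen u hu)
  -- continuity of h and g
  have hcont : Continuous (fun u => (inner ℝ (deriv γ a) (deriv γ u) : ℝ)) :=
    continuous_const.inner Tcont
  have gcont : Continuous (fun u => ε * (inner ℝ (Jrot (deriv γ a)) (deriv γ u) : ℝ)) :=
    continuous_const.mul (continuous_const.inner Tcont)
  -- strict monotonicity of the slope
  have mono : StrictMonoOn (fun u => (ε * (inner ℝ (Jrot (deriv γ a)) (deriv γ u) : ℝ))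
      / (inner ℝ (deriv γ a) (deriv γ u) : ℝ)) (Set.Icc a b) := by
    apply strictMonoOn_of_deriv_pos (convex_Icc a b)
    · exact (gcont.continuousOn).div (hcont.continuousOn) (fun u hu => (hpos u hu).ne')
    · intro x hx
      rw [interior_Icc] at hx
      have hx' : x ∈ Set.Icc a b := Set.Ioo_subset_Icc_self hx
      have hhd : HasDerivAt (fun u => (inner ℝ (deriv γ a) (deriv γ u) : ℝ))
          ((inner ℝ (deriv γ a) (deriv (deriv γ) x) : ℝ)) x := by
        have := HasDerivAt.inner ℝ (hasDerivAt_const x (deriv γ a)) ((hTd x).hasDerivAt)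
        simpa using this
      have hgd : HasDerivAt (fun u => ε * (inner ℝ (Jrot (deriv γ a)) (deriv γ u) : ℝ))
          (ε * (inner ℝ (Jrot (deriv γ a)) (deriv (deriv γ) x) : ℝ)) x := by
        have h0 := HasDerivAt.inner ℝ (hasDerivAt_const x (Jrot (deriv γ a))) ((hTd x).hasDerivAt)
        simp only [inner_zero_left, add_zero, zero_add] at h0
        simpa using h0.const_mul ε
      have hne : (inner ℝ (deriv γ a) (deriv γ x) : ℝ) ≠ 0 := (hpos x hx').ne'
      have hD : deriv (fun u => (ε * (inner ℝ (Jrot (deriv γ a)) (deriv γ u) : ℝ))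
          / (inner ℝ (deriv γ a) (deriv γ u) : ℝ)) x = _ := (hgd.div hhd hne).deriv
      rw [hD]
      apply div_pos
      · have A1 : (inner ℝ (Jrot (deriv γ a)) (deriv (deriv γ) x) : ℝ)
            = κ x * (inner ℝ (deriv γ a) (deriv γ x) : ℝ) := by
          rw [hdecomp x, real_inner_smul_right, inner_Jrot_Jrot]
        have A2 : (inner ℝ (deriv γ a) (deriv (deriv γ) x) : ℝ)
            = -(κ x * (inner ℝ (Jrot (deriv γ a)) (deriv γ x) : ℝ)) := by
          rw [hdecomp x, real_inner_smul_right]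
          have := inner_Jrot_left (deriv γ a) (deriv γ x)
          linear_combination κ x * this
        have A3 : (inner ℝ (deriv γ a) (deriv γ x) : ℝ)^2
            + (inner ℝ (Jrot (deriv γ a)) (deriv γ x) : ℝ)^2 = 1 := by
          have h0 := inner_sq_add_sq (deriv γ x) (deriv γ a)
          rw [harc x, harc a] at h0
          have c1 : (inner ℝ (deriv γ a) (deriv γ x) : ℝ) = inner ℝ (deriv γ x) (deriv γ a) :=
            real_inner_comm _ _
          have c2 : (inner ℝ (Jrot (deriv γ a)) (deriv γ x) : ℝ)
              = inner ℝ (deriv γ x) (Jrot (deriv γ a)) := real_inner_comm _ _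
          rw [c1, c2]
          linarith [h0]
        have key : ε * (inner ℝ (Jrot (deriv γ a)) (deriv (deriv γ) x) : ℝ)
              * (inner ℝ (deriv γ a) (deriv γ x) : ℝ)
            - ε * (inner ℝ (Jrot (deriv γ a)) (deriv γ x) : ℝ)
              * (inner ℝ (deriv γ a) (deriv (deriv γ) x) : ℝ) = ε * κ x := by
          rw [A1, A2]
          linear_combination (ε * κ x) * A3
        have := hεκ x
        linarith [key, this]
      · exact pow_pos (hpos x hx') 2
  -- the integral identities
  have hvec : (∫ u in t..s, deriv γ u) = ∫ u in t'..s', deriv γ u := by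
    rw [ftc, ftc, heq]
  have inner_int : ∀ (w : Euc 2) (x y : ℝ),
      (∫ u in x..y, (inner ℝ w (deriv γ u) : ℝ)) = inner ℝ w (∫ u in x..y, deriv γ u) := by
    intro w x y
    have := ContinuousLinearMap.intervalIntegral_comp_comm (μ := MeasureTheory.volume)
      (innerSL ℝ w) (Tcont.intervalIntegrable x y)
    simpa using this
  have e1 : (∫ u in t..s, (inner ℝ (deriv γ a) (deriv γ u) : ℝ))
      = ∫ u in t'..s', (inner ℝ (deriv γ a) (deriv γ u) : ℝ) := by
    rw [inner_int, inner_int, hvec]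
  have e2 : (∫ u in t..s, ε * (inner ℝ (Jrot (deriv γ a)) (deriv γ u) : ℝ))
      = ∫ u in t'..s', ε * (inner ℝ (Jrot (deriv γ a)) (deriv γ u) : ℝ) := by
    rw [intervalIntegral.integral_const_mul, intervalIntegral.integral_const_mul,
      inner_int, inner_int, hvec]
  exact chord_key hcont gcont hpos mono hsm htm hs'm ht'm hst e1 e2
end
end
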